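/- For each 1 ≤ t ≤ θ, with probability at least 1 − o(1/n) (uniformly in t) the number of indices i ∈ [m] such that |{ j : k₁ < j ≤ k and |Φ_{ij}| ∈ Z_t }| ≥ k/4 is at most n·exp(−k). -/

import Mathlib

open Finset MeasureTheory Filter
open scoped ENNReal

attribute [local instance] Classical.propDecidable

namespace RandomKSAT

/-- A literal over `n` variables: a pair (variable, sign), `true` = positive occurrence. -/
abbrev Lit (n : ℕ) := Fin n × Bool

/-- A `k`-SAT formula with `n` variables and `m` (ordered) clauses, each an ordered
`k`-tuple of literals. -/
abbrev Formula (n m k : ℕ) := Fin m → Fin k → Lit n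

instance formulaMS (n m k : ℕ) : MeasurableSpace (Formula n m k) := ⊤

/-- The probability of an event under the uniform distribution on `Ω_k(n,m)`. -/
noncomputable def Pr (n m k : ℕ) (A : Set (Formula n m k)) : ℝ :=
  ((Finset.univ.filter (fun Φ : Formula n m k => Φ ∈ A)).card : ℝ) /
    ((Finset.univ : Finset (Formula n m k)).card : ℝ)

/-- Expectation of a random variable with respect to the uniform distribution. -/
noncomputable def EV (n m k : ℕ) (f : Formula n m k → ℝ) : ℝ :=
  (∑ Φ : Formula n m k, f Φ) / (Fintype.card (Formula n m k) : ℝ)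

/-- The uniform probability measure on `Ω_k(n,m)`. -/
noncomputable def unif (n m k : ℕ) : Measure (Formula n m k) :=
  ((Fintype.card (Formula n m k) : ℝ≥0∞))⁻¹ • Measure.count

variable {n m k : ℕ}

/-- A literal is true under an assignment. -/
def litTrue (σ : Fin n → Bool) (l : Lit n) : Prop := σ l.1 = l.2

/-- An assignment satisfies a formula if every clause contains a true literal. -/
def sat (σ : Fin n → Bool) (Φ : Formula n m k) : Prop := ∀ i, ∃ j, litTrue σ (Φ i j)

/-- The assignment `σ_Z`: variables in `Z` are false, all others true. -/
noncomputable def sigmaZ (Z : Finset (Fin n)) : Fin n → Bool :=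
  fun x => if x ∈ Z then false else true

/-- Number of positive literals of clause `i`. -/
noncomputable def posCount (Φ : Formula n m k) (i : Fin m) : ℕ :=
  (Finset.univ.filter (fun j => (Φ i j).2 = true)).card

/-- Clause `i` is all-negative. -/
def allNeg (Φ : Formula n m k) (i : Fin m) : Prop := ∀ j, (Φ i j).2 = false

/-- The set of indices of `Z`-unique clauses: exactly one positive literal with variable
outside `Z`, and no negative literal with variable in `Z`. -/
noncomputable def Uset (Φ : Formula n m k) (Z : Finset (Fin n)) : Finset (Fin m) :=
  Finset.univ.filter (fun i =>
    (Finset.univ.filter (fun j => (Φ i j).2 = true ∧ (Φ i j).1 ∉ Z)).card = 1 ∧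
    ∀ j, (Φ i j).2 = false → (Φ i j).1 ∉ Z)

/-- `U_t(x)`: the number of `Z`-unique clauses in which `x` occurs positively. -/
noncomputable def Ux (Φ : Formula n m k) (Z : Finset (Fin n)) (x : Fin n) : ℕ :=
  ((Uset Φ Z).filter (fun i => ∃ j, Φ i j = (x, true))).card

/-- `k₁ = ⌈k/2⌉`. -/
def k1 (k : ℕ) : ℕ := (k + 1) / 2

/-- The map `π₀`: `Sum.inl b` records only the sign `b` of a literal, `Sum.inr l`
records the literal `l` itself (revealed). -/
noncomputable def pi0 (Φ : Formula n m k) (i : Fin m) (j : Fin k) : Bool ⊕ Lit n :=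
  if i ∈ Uset Φ ∅ ∧ (Φ i j).2 = true then Sum.inr (Φ i j) else Sum.inl (Φ i j).2

/-- State of the Phase-1 process: the set `Z_t`, the map `π_t`, the clause `φ_t`
and variable `z_t` chosen at the last step (if any), and whether the process stopped. -/
structure P1State (n m k : ℕ) where
  Z : Finset (Fin n)
  pi : Fin m → Fin k → Bool ⊕ Lit n
  lastPhi : Option (Fin m)
  lastZ : Option (Fin n)
  stopped : Bool

/-- One step (PI1--PI4) of the Phase-1 process. -/
noncomputable def p1step (Φ : Formula n m k) (s : P1State n m k) : P1State n m k :=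
  if s.stopped then s else
  let E := Finset.univ.filter (fun i : Fin m => allNeg Φ i ∧ ∀ j, (Φ i j).1 ∉ s.Z)
  if hE : E.Nonempty then
    if hk : 0 < k then
      let φt := E.min' hE
      let J := Finset.univ.filter
        (fun j : Fin k => j.val + 1 < k1 k ∧ Ux Φ s.Z ((Φ φt j).1) = 0)
      let jsel : Fin k :=
        if hJ : J.Nonempty then J.min' hJ
        else ⟨min (k1 k - 1) (k - 1), by
          have h1 := Nat.min_le_right (k1 k - 1) (k - 1); omega⟩
      let z := (Φ φt jsel).1
      let Z' := insert z s.Z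
      { Z := Z'
        pi := fun i j =>
          if (i = φt ∧ j.val < k1 k) ∨ (Φ i j).1 ∈ Z' ∨
             (i ∈ Uset Φ Z' ∧ pi0 Φ i j = Sum.inl true)
          then Sum.inr (Φ i j) else s.pi i j
        lastPhi := some φt
        lastZ := some z
        stopped := false }
    else { s with stopped := true, lastPhi := none, lastZ := none }
  else { s with stopped := true, lastPhi := none, lastZ := none }

/-- The Phase-1 process: state after `t` steps. -/
noncomputable def p1 (Φ : Formula n m k) : ℕ → P1State n m k
  | 0 => ⟨∅, pi0 Φ, none, none, false⟩
  | t + 1 => p1step Φ (p1 Φ t)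

/-- The stopping time `T` of the Phase-1 process. -/
noncomputable def TT (Φ : Formula n m k) : ℕ := sInf {t | (p1 Φ (t + 1)).stopped = true}

/-- The set `Z = Z_T` produced by Phase 1. -/
noncomputable def ZT (Φ : Formula n m k) : Finset (Fin n) := (p1 Φ (TT Φ)).Z

/-- The set `𝒰_t`: clauses with a positive literal, but such that at time `t` no
position shows `π_t(i,j) = 1` nor a negative literal with variable in `Z_t`. -/
noncomputable def curlyU (Φ : Formula n m k) (t : ℕ) : Finset (Fin m) :=
  Finset.univ.filter (fun i =>
    (∃ j, pi0 Φ i j ≠ Sum.inl false) ∧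
    ¬ ∃ j, (p1 Φ t).pi i j = Sum.inl true ∨
      ∃ x ∈ (p1 Φ t).Z, (p1 Φ t).pi i j = Sum.inr (x, false))

/-- The map `ψ_t : 𝒰_t → V` (junk value outside `𝒰_t`). -/
noncomputable def psi (hn : 0 < n) (Φ : Formula n m k) (t : ℕ) (i : Fin m) : Fin n :=
  let s := sInf {s | i ∈ curlyU Φ s}
  if h : (Finset.univ.filter
      (fun j : Fin k => (Φ i j).2 = true ∧ (Φ i j).1 ∉ (p1 Φ s).Z)).Nonempty then
    (Φ i ((Finset.univ.filter
      (fun j : Fin k => (Φ i j).2 = true ∧ (Φ i j).1 ∉ (p1 Φ s).Z)).min' h)).1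
  else ((p1 Φ s).lastZ).getD ⟨0, hn⟩

/-- Clause `i` is `(Z,Z')`-endangered. -/
def endangered (Φ : Formula n m k) (Z Z' : Finset (Fin n)) (i : Fin m) : Prop :=
  ¬ ∃ j, litTrue (sigmaZ Z) (Φ i j) ∧ (Φ i j).1 ∉ Z'

/-- A variable is `(Z,Z')`-unsafe. -/
def unsafeVar (Φ : Formula n m k) (Z Z' : Finset (Fin n)) (x : Fin n) : Prop :=
  x ∈ Z ∪ Z' ∨ ∃ i l, Φ i l = (x, true) ∧ ∀ j, j ≠ l →
    (((Φ i j).2 = true ∧ (Φ i j).1 ∈ Z ∪ Z') ∨ ((Φ i j).2 = false ∧ (Φ i j).1 ∉ Z))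

/-- The Phase-2 while-loop with fuel. -/
noncomputable def p2go (Φ : Formula n m k) (Z : Finset (Fin n)) :
    ℕ → Finset (Fin n) → Finset (Fin n)
  | 0, Z' => Z'
  | f + 1, Z' =>
    let Q := Finset.univ.filter (fun i : Fin m =>
      endangered Φ Z Z' i ∧
        (Finset.univ.filter (fun j => (Φ i j).1 ∈ Z')).card < 3)
    if hQ : Q.Nonempty then
      let i := Q.min' hQ
      let Ssafe := Finset.univ.filter (fun j : Fin k =>
        k1 k ≤ j.val ∧ j.val + 6 ≤ k ∧ ¬ unsafeVar Φ Z Z' ((Φ i j).1))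
      let S := if 3 ≤ Ssafe.card then Ssafe
        else Finset.univ.filter (fun j : Fin k => k ≤ j.val + 5 ∧ (Φ i j).1 ∉ Z')
      p2go Φ Z f (Z' ∪ (((S.sort (· ≤ ·)).take 3).map (fun j => (Φ i j).1)).toFinset)
    else Z'

/-- The set `Z'` produced by Phase 2. -/
noncomputable def p2 (Φ : Formula n m k) : Finset (Fin n) := p2go Φ (ZT Φ) m ∅

/-- `f` is a matching in the bipartite graph `G(Φ,Z,Z')` covering all
`(Z,Z')`-endangered clauses: it assigns to each endangered clause a variable of `Z'`
occurring in it, injectively on endangered clauses. -/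
def coversEndangered (Φ : Formula n m k) (Z Z' : Finset (Fin n)) (f : Fin m → Fin n) : Prop :=
  (∀ i, endangered Φ Z Z' i → f i ∈ Z' ∧ ∃ j, (Φ i j).1 = f i) ∧
  ∀ i i', endangered Φ Z Z' i → endangered Φ Z Z' i' → f i = f i' → i = i'

/-- The output of the algorithm `Fix` (Phase 3): the assignment `σ_{Z,Z',M}` if a
matching `M` covering all `(Z,Z')`-endangered clauses exists, `none` ("fail") otherwise. -/
noncomputable def fixOutput (Φ : Formula n m k) : Option (Fin n → Bool) :=
  if h : ∃ f : Fin m → Fin n, coversEndangered Φ (ZT Φ) (p2 Φ) f then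
    some (fun x =>
      if x ∈ ZT Φ ∧ x ∉ p2 Φ then false
      else if ∃ i, endangered Φ (ZT Φ) (p2 Φ) i ∧ Classical.choose h i = x ∧
          ∃ j, Φ i j = (x, false) then false
      else true)
  else none

/-- The `σ`-algebra `F_t` generated by the equivalence classes of `≡_t`. -/
noncomputable def Ft (n m k : ℕ) (t : ℕ) : MeasurableSpace (Formula n m k) :=
  MeasurableSpace.comap (fun Φ : Formula n m k => fun s : Fin (t + 1) => (p1 Φ s.val).pi) ⊤

/-- The `≡_t`-equivalence class of `Φ`. -/
noncomputable def cls (t : ℕ) (Φ : Formula n m k) : Finset (Formula n m k) :=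
  Finset.univ.filter (fun Ψ => ∀ s ≤ t, (p1 Ψ s).pi = (p1 Φ s).pi)

/-- The set `E_t` of positions whose literal is not yet revealed at time `t`. -/
noncomputable def Et (Φ : Formula n m k) (t : ℕ) : Finset (Fin m × Fin k) :=
  Finset.univ.filter (fun p => ∃ b, (p1 Φ t).pi p.1 p.2 = Sum.inl b)

/-- `ω = (1-ε) ln k`. -/
noncomputable def omOf (ε : ℝ) (k : ℕ) : ℝ := (1 - ε) * Real.log k

/-- `m = ⌊(1-ε) 2^k k⁻¹ (ln k) n⌋`. -/
noncomputable def mOf (ε : ℝ) (k n : ℕ) : ℕ := ⌊(1 - ε) * 2 ^ k * Real.log k / k * n⌋₊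

/-- `θ = ⌊4 n k⁻¹ ln ω⌋`. -/
noncomputable def thetaOf (ε : ℝ) (k n : ℕ) : ℕ := ⌊4 * (n : ℝ) / k * Real.log (omOf ε k)⌋₊

/-- The indicator random variable `B_t` of Corollary 9. -/
noncomputable def Bt (ε : ℝ) (n m k : ℕ) (t : ℕ) : Formula n m k → ℝ := fun Φ =>
  if t ≤ TT Φ ∧
      (∃ i, (p1 Φ t).lastPhi = some i ∧
        ∀ j : Fin k, j.val + 1 < k1 k → 0 < Ux Φ (p1 Φ (t - 1)).Z ((Φ i j).1)) ∧
      ((n : ℝ) * (k : ℝ) ^ (ε / 2 - 1) ≤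
        ((Finset.univ.filter (fun x : Fin n =>
          x ∉ (p1 Φ (t - 1)).Z ∧ Ux Φ (p1 Φ (t - 1)).Z x = 0)).card : ℝ)) ∧
      (((Uset Φ (p1 Φ t).Z).card : ℝ) ≤ (1 + ε / 3) * omOf ε k * n)
  then 1 else 0

/-- The indicator `H_{tij}`. -/
noncomputable def Hind (n m k : ℕ) (t : ℕ) (i : Fin m) (j : Fin k) : Formula n m k → ℝ :=
  fun Φ =>
  if (p1 Φ (t - 1)).pi i j = Sum.inl true ∧
      ∃ z, (p1 Φ t).lastZ = some z ∧ (p1 Φ t).pi i j = Sum.inr (z, true)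
  then 1 else 0

/-- The indicator `S_{tij}`. -/
noncomputable def Sind (n m k : ℕ) (t : ℕ) (i : Fin m) (j : Fin k) : Formula n m k → ℝ :=
  fun Φ => if t ≤ TT Φ ∧ ∃ b, (p1 Φ t).pi i j = Sum.inl b then 1 else 0

set_option linter.unusedVariables false

variable {n m k : ℕ}

lemma p1_succ (Φ : Formula n m k) (t : ℕ) : p1 Φ (t + 1) = p1step Φ (p1 Φ t) := rfl

lemma p1_zero (Φ : Formula n m k) : p1 Φ 0 = ⟨∅, pi0 Φ, none, none, false⟩ := rfl

/-- The candidate set in (PI1). -/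
noncomputable def stepE (Φ : Formula n m k) (W : Finset (Fin n)) : Finset (Fin m) :=
  Finset.univ.filter (fun i : Fin m => allNeg Φ i ∧ ∀ j, (Φ i j).1 ∉ W)

/-- The chosen clause in (PI1). -/
noncomputable def stepPhi (Φ : Formula n m k) (W : Finset (Fin n))
    (hE : (stepE Φ W).Nonempty) : Fin m := (stepE Φ W).min' hE

/-- The set `J` in (PI2). -/
noncomputable def selJ (Φ : Formula n m k) (W : Finset (Fin n)) (φt : Fin m) :
    Finset (Fin k) :=
  Finset.univ.filter (fun j : Fin k => j.val + 1 < k1 k ∧ Ux Φ W ((Φ φt j).1) = 0)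

/-- The chosen position in (PI2). -/
noncomputable def selj (hk : 0 < k) (Φ : Formula n m k) (W : Finset (Fin n)) (φt : Fin m) :
    Fin k :=
  if hJ : (selJ Φ W φt).Nonempty then (selJ Φ W φt).min' hJ
  else ⟨min (k1 k - 1) (k - 1), by
    have h1 := Nat.min_le_right (k1 k - 1) (k - 1); omega⟩

/-- The output of an active step of the process. -/
noncomputable def activeOut (Φ : Formula n m k) (s : P1State n m k)
    (hE : (stepE Φ s.Z).Nonempty) (hk : 0 < k) : P1State n m k :=
  let φt := stepPhi Φ s.Z hE
  let z := (Φ φt (selj hk Φ s.Z φt)).1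
  let Z' := insert z s.Z
  { Z := Z'
    pi := fun i j =>
      if (i = φt ∧ j.val < k1 k) ∨ (Φ i j).1 ∈ Z' ∨
         (i ∈ Uset Φ Z' ∧ pi0 Φ i j = Sum.inl true)
      then Sum.inr (Φ i j) else s.pi i j
    lastPhi := some φt
    lastZ := some z
    stopped := false }

/-- Trichotomy for `p1step`. -/
lemma p1step_cases (Φ : Formula n m k) (s : P1State n m k) :
    (p1step Φ s = s ∧ s.stopped = true) ∨
    ((p1step Φ s).Z = s.Z ∧ (p1step Φ s).pi = s.pi ∧ (p1step Φ s).stopped = true ∧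
      (p1step Φ s).lastZ = none ∧ (p1step Φ s).lastPhi = none) ∨
    (∃ hE : (stepE Φ s.Z).Nonempty, ∃ hk : 0 < k,
      s.stopped = false ∧ p1step Φ s = activeOut Φ s hE hk) := by
  unfold p1step
  by_cases hst : s.stopped = true
  · rw [if_pos hst]; exact Or.inl ⟨rfl, hst⟩
  · rw [if_neg hst]
    dsimp only
    by_cases hE : (Finset.univ.filter
        (fun i : Fin m => allNeg Φ i ∧ ∀ j, (Φ i j).1 ∉ s.Z)).Nonempty
    · rw [dif_pos hE]
      by_cases hk : 0 < k
      · rw [dif_pos hk]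
        refine Or.inr (Or.inr ⟨hE, hk, by simpa using hst, ?_⟩)
        unfold activeOut stepPhi stepE selj selJ
        rfl
      · rw [dif_neg hk]
        exact Or.inr (Or.inl ⟨rfl, rfl, rfl, rfl, rfl⟩)
    · rw [dif_neg hE]
      exact Or.inr (Or.inl ⟨rfl, rfl, rfl, rfl, rfl⟩)

lemma activeOut_Z (Φ : Formula n m k) (s : P1State n m k) (hE) (hk) :
    (activeOut Φ s hE hk).Z =
      insert ((Φ (stepPhi Φ s.Z hE) (selj hk Φ s.Z (stepPhi Φ s.Z hE))).1) s.Z := rfl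

lemma activeOut_lastZ (Φ : Formula n m k) (s : P1State n m k) (hE) (hk) :
    (activeOut Φ s hE hk).lastZ =
      some ((Φ (stepPhi Φ s.Z hE) (selj hk Φ s.Z (stepPhi Φ s.Z hE))).1) := rfl

lemma activeOut_stopped (Φ : Formula n m k) (s : P1State n m k) (hE) (hk) :
    (activeOut Φ s hE hk).stopped = false := rfl

lemma activeOut_pi (Φ : Formula n m k) (s : P1State n m k) (hE) (hk) (i : Fin m) (j : Fin k) :
    (activeOut Φ s hE hk).pi i j =
      if (i = stepPhi Φ s.Z hE ∧ j.val < k1 k) ∨ (Φ i j).1 ∈ (activeOut Φ s hE hk).Z ∨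
         (i ∈ Uset Φ (activeOut Φ s hE hk).Z ∧ pi0 Φ i j = Sum.inl true)
      then Sum.inr (Φ i j) else s.pi i j := rfl

lemma stepPhi_spec (Φ : Formula n m k) (W : Finset (Fin n)) (hE : (stepE Φ W).Nonempty) :
    allNeg Φ (stepPhi Φ W hE) ∧ ∀ j, (Φ (stepPhi Φ W hE) j).1 ∉ W := by
  have := (stepE Φ W).min'_mem hE
  unfold stepE at this
  simp at this; exact this

lemma selj_lt_k1 (hk : 0 < k) (Φ : Formula n m k) (W : Finset (Fin n)) (φt : Fin m)
    (hkk : k1 k ≤ k) : (selj hk Φ W φt).val < k1 k := by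
  unfold selj
  split
  · next hJ =>
    have hm : (selJ Φ W φt).min' hJ ∈ Finset.univ.filter
        (fun j : Fin k => j.val + 1 < k1 k ∧ Ux Φ W ((Φ φt j).1) = 0) :=
      Finset.min'_mem _ hJ
    rw [Finset.mem_filter] at hm
    omega
  · show min (k1 k - 1) (k - 1) < k1 k
    have : 0 < k1 k := by unfold k1; omega
    have h1 := Nat.min_le_left (k1 k - 1) (k - 1)
    omega

lemma pi0_cases (Φ : Formula n m k) (i : Fin m) (j : Fin k) :
    pi0 Φ i j = Sum.inr (Φ i j) ∨ pi0 Φ i j = Sum.inl (Φ i j).2 := by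
  unfold pi0; split
  · left; rfl
  · right; rfl

lemma p1step_pi_cases (Φ : Formula n m k) (s : P1State n m k) (i : Fin m) (j : Fin k) :
    (p1step Φ s).pi i j = s.pi i j ∨ (p1step Φ s).pi i j = Sum.inr (Φ i j) := by
  rcases p1step_cases Φ s with ⟨h, _⟩ | ⟨_, h, _⟩ | ⟨hE, hk, _, h⟩
  · rw [h]; left; rfl
  · rw [h]; left; rfl
  · rw [h, activeOut_pi]
    split
    · right; rfl
    · left; rfl

lemma pi_cases (Φ : Formula n m k) (t : ℕ) (i : Fin m) (j : Fin k) :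
    (p1 Φ t).pi i j = Sum.inr (Φ i j) ∨ (p1 Φ t).pi i j = Sum.inl (Φ i j).2 := by
  induction t with
  | zero => exact pi0_cases Φ i j
  | succ t ih =>
    rcases p1step_pi_cases Φ (p1 Φ t) i j with h | h
    · rw [p1_succ, h]; exact ih
    · left; rw [p1_succ, h]

lemma pi_inr_eq {Φ : Formula n m k} {t : ℕ} {i : Fin m} {j : Fin k} {l : Lit n}
    (h : (p1 Φ t).pi i j = Sum.inr l) : l = Φ i j := by
  rcases pi_cases Φ t i j with h' | h' <;> rw [h] at h'
  · exact Sum.inr.inj h'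
  · exact absurd h' (by simp)

lemma pi_inl_sign {Φ : Formula n m k} {t : ℕ} {i : Fin m} {j : Fin k} {b : Bool}
    (h : (p1 Φ t).pi i j = Sum.inl b) : b = (Φ i j).2 := by
  rcases pi_cases Φ t i j with h' | h' <;> rw [h] at h'
  · exact absurd h' (by simp)
  · exact Sum.inl.inj h'

lemma rev_mono_succ {Φ : Formula n m k} {t : ℕ} {i : Fin m} {j : Fin k} {l : Lit n}
    (h : (p1 Φ t).pi i j = Sum.inr l) : (p1 Φ (t + 1)).pi i j = Sum.inr l := by
  rcases p1step_pi_cases Φ (p1 Φ t) i j with h' | h'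
  · rw [p1_succ, h', h]
  · rw [p1_succ, h', pi_inr_eq h]

lemma rev_mono {Φ : Formula n m k} {t t' : ℕ} (htt : t ≤ t') {i : Fin m} {j : Fin k} {l : Lit n}
    (h : (p1 Φ t).pi i j = Sum.inr l) : (p1 Φ t').pi i j = Sum.inr l := by
  induction t', htt using Nat.le_induction with
  | base => exact h
  | succ t' htt ih => exact rev_mono_succ ih

lemma unrev_mono {Φ : Formula n m k} {t t' : ℕ} (htt : t ≤ t') {i : Fin m} {j : Fin k} {b : Bool}
    (h : (p1 Φ t').pi i j = Sum.inl b) : (p1 Φ t).pi i j = Sum.inl (Φ i j).2 := by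
  rcases pi_cases Φ t i j with h' | h'
  · rw [rev_mono htt h'] at h; exact absurd h (by simp)
  · exact h'

lemma Z_mono_succ (Φ : Formula n m k) (t : ℕ) : (p1 Φ t).Z ⊆ (p1 Φ (t + 1)).Z := by
  rcases p1step_cases Φ (p1 Φ t) with ⟨h, _⟩ | ⟨h, _⟩ | ⟨hE, hk, _, h⟩
  · rw [p1_succ, h]
  · rw [p1_succ, h]
  · rw [p1_succ, h, activeOut_Z]; exact Finset.subset_insert _ _

lemma Z_mono {Φ : Formula n m k} {t t' : ℕ} (htt : t ≤ t') : (p1 Φ t).Z ⊆ (p1 Φ t').Z := by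
  induction t', htt using Nat.le_induction with
  | base => exact Finset.Subset.refl _
  | succ t' htt ih => exact ih.trans (Z_mono_succ Φ t')

lemma card_Z_le (Φ : Formula n m k) (t : ℕ) : (p1 Φ t).Z.card ≤ t := by
  induction t with
  | zero => simp [p1_zero]
  | succ t ih =>
    rcases p1step_cases Φ (p1 Φ t) with ⟨h, _⟩ | ⟨h, _⟩ | ⟨hE, hk, _, h⟩
    · rw [p1_succ, h]; omega
    · rw [p1_succ, h]; omega
    · rw [p1_succ, h, activeOut_Z]
      have := Finset.card_insert_le ((Φ (stepPhi Φ (p1 Φ t).Z hE)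
        (selj hk Φ (p1 Φ t).Z (stepPhi Φ (p1 Φ t).Z hE))).1) (p1 Φ t).Z
      omega

lemma mem_Z_rev {Φ : Formula n m k} {t : ℕ} {i : Fin m} {j : Fin k}
    (h : (Φ i j).1 ∈ (p1 Φ t).Z) : (p1 Φ t).pi i j = Sum.inr (Φ i j) := by
  induction t with
  | zero => simp [p1_zero] at h
  | succ t ih =>
    rw [p1_succ] at h ⊢
    rcases p1step_cases Φ (p1 Φ t) with ⟨he, _⟩ | ⟨heZ, hepi, _⟩ | ⟨hE, hk, _, he⟩
    · rw [he] at h ⊢; exact ih h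
    · rw [heZ] at h; rw [hepi]; exact ih h
    · rw [he] at h ⊢
      rw [activeOut_pi, if_pos (Or.inr (Or.inl h))]

lemma unrev_not_mem_Z {Φ : Formula n m k} {t : ℕ} {i : Fin m} {j : Fin k} {b : Bool}
    (h : (p1 Φ t).pi i j = Sum.inl b) : (Φ i j).1 ∉ (p1 Φ t).Z := by
  intro hm
  rw [mem_Z_rev hm] at h
  exact absurd h (by simp)

lemma Uset_pos_rev {Φ : Formula n m k} {t : ℕ} {i : Fin m} {j : Fin k}
    (hU : i ∈ Uset Φ (p1 Φ t).Z) (hpos : (Φ i j).2 = true) :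
    (p1 Φ t).pi i j = Sum.inr (Φ i j) := by
  induction t with
  | zero =>
    show pi0 Φ i j = _
    unfold pi0
    rw [if_pos ⟨by simpa [p1_zero] using hU, hpos⟩]
  | succ t ih =>
    rcases p1step_cases Φ (p1 Φ t) with ⟨he, _⟩ | ⟨heZ, hepi, _⟩ | ⟨hE, hk, _, he⟩
    · rw [p1_succ, he]; rw [p1_succ, he] at hU; exact ih hU
    · rw [p1_succ, hepi]; rw [p1_succ, heZ] at hU; exact ih hU
    · rw [p1_succ, he] at hU
      rcases pi0_cases Φ i j with h0 | h0
      · exact rev_mono (Nat.zero_le (t + 1)) (show (p1 Φ 0).pi i j = _ from h0)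
      · rw [p1_succ, he, activeOut_pi, if_pos (Or.inr (Or.inr ⟨hU, by rw [h0, hpos]⟩))]

lemma stopped_lastZ_none {Φ : Formula n m k} {t : ℕ}
    (h : (p1 Φ t).stopped = true) : (p1 Φ t).lastZ = none := by
  induction t with
  | zero => rfl
  | succ t ih =>
    rw [p1_succ] at h ⊢
    rcases p1step_cases Φ (p1 Φ t) with ⟨he, hst⟩ | ⟨_, _, _, hlz, _⟩ | ⟨hE, hk, _, he⟩
    · rw [he]; exact ih hst
    · exact hlz
    · rw [he] at h; simp [activeOut_stopped] at h

lemma lastZ_spec {Φ : Formula n m k} {t : ℕ} {z : Fin n}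
    (h : (p1 Φ (t + 1)).lastZ = some z) :
    (p1 Φ (t + 1)).Z = insert z (p1 Φ t).Z ∧ z ∉ (p1 Φ t).Z ∧
    ∃ (hE : (stepE Φ (p1 Φ t).Z).Nonempty) (hk : 0 < k),
      p1 Φ (t + 1) = activeOut Φ (p1 Φ t) hE hk ∧
      z = (Φ (stepPhi Φ (p1 Φ t).Z hE) (selj hk Φ (p1 Φ t).Z (stepPhi Φ (p1 Φ t).Z hE))).1 := by
  rw [p1_succ] at h ⊢
  rcases p1step_cases Φ (p1 Φ t) with ⟨he, hst⟩ | ⟨_, _, _, hlz, _⟩ | ⟨hE, hk, _, he⟩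
  · rw [he] at h
    rw [stopped_lastZ_none hst] at h
    simp at h
  · rw [hlz] at h; simp at h
  · rw [he] at h ⊢
    rw [activeOut_lastZ, Option.some_inj] at h
    subst h
    refine ⟨rfl, ?_, hE, hk, rfl, rfl⟩
    exact (stepPhi_spec Φ (p1 Φ t).Z hE).2 _

/-! ### Step-function case lemmas -/

lemma P1State.ext' {a b : P1State n m k} (hZ : a.Z = b.Z) (hpi : a.pi = b.pi)
    (hφ : a.lastPhi = b.lastPhi) (hz : a.lastZ = b.lastZ) (hs : a.stopped = b.stopped) :
    a = b := by
  cases a; cases b; simp_all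

lemma p1step_of_stopped (Φ : Formula n m k) {s : P1State n m k} (h : s.stopped = true) :
    p1step Φ s = s := by
  unfold p1step; rw [if_pos h]

lemma p1step_of_notE (Φ : Formula n m k) {s : P1State n m k} (h : ¬s.stopped = true)
    (hE : ¬(stepE Φ s.Z).Nonempty) :
    p1step Φ s = { s with stopped := true, lastPhi := none, lastZ := none } := by
  unfold p1step; rw [if_neg h]
  dsimp only
  rw [dif_neg (show ¬(Finset.univ.filter
    (fun i : Fin m => allNeg Φ i ∧ ∀ j, (Φ i j).1 ∉ s.Z)).Nonempty from hE)]

lemma p1step_of_notk (Φ : Formula n m k) {s : P1State n m k} (h : ¬s.stopped = true)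
    (hE : (stepE Φ s.Z).Nonempty) (hk : ¬0 < k) :
    p1step Φ s = { s with stopped := true, lastPhi := none, lastZ := none } := by
  unfold p1step; rw [if_neg h]
  dsimp only
  rw [dif_pos (show (Finset.univ.filter
    (fun i : Fin m => allNeg Φ i ∧ ∀ j, (Φ i j).1 ∉ s.Z)).Nonempty from hE), dif_neg hk]

lemma p1step_active (Φ : Formula n m k) {s : P1State n m k} (h : ¬s.stopped = true)
    (hE : (stepE Φ s.Z).Nonempty) (hk : 0 < k) :
    p1step Φ s = activeOut Φ s hE hk := by
  unfold p1step; rw [if_neg h]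
  dsimp only
  rw [dif_pos (show (Finset.univ.filter
    (fun i : Fin m => allNeg Φ i ∧ ∀ j, (Φ i j).1 ∉ s.Z)).Nonempty from hE), dif_pos hk]
  unfold activeOut stepPhi stepE selj selJ
  rfl

lemma min'_congr {α : Type*} [LinearOrder α] {A B : Finset α} (h : A = B)
    (hA : A.Nonempty) (hB : B.Nonempty) : A.min' hA = B.min' hB := by
  subst h; rfl

lemma selj_congr (hk : 0 < k) {Φa Φb : Formula n m k} {Wa Wb : Finset (Fin n)}
    {φa φb : Fin m} (h : selJ Φa Wa φa = selJ Φb Wb φb) :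
    selj hk Φa Wa φa = selj hk Φb Wb φb := by
  unfold selj
  have hgen : ∀ (A B : Finset (Fin k)) (_ : A = B) (d : Fin k),
      (if hJ : A.Nonempty then A.min' hJ else d) =
      (if hJ : B.Nonempty then B.min' hJ else d) := by
    intro A B hAB d; subst hAB; rfl
  exact hgen _ _ h _

lemma pi0_inl_sign' {Φ : Formula n m k} {i : Fin m} {j : Fin k} {b : Bool}
    (h : pi0 Φ i j = Sum.inl b) : b = (Φ i j).2 := by
  rcases pi0_cases Φ i j with h' | h' <;> rw [h] at h'
  · exact absurd h' (by simp)
  · exact Sum.inl.inj h'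

/-! ### Congruence lemmas for single-coordinate replacement -/

section Repl

variable {Φ₁ Φ₂ : Formula n m k} {i₀ : Fin m} {j₀ : Fin k}
variable (hoff : ∀ i j, ¬(i = i₀ ∧ j = j₀) → Φ₂ i j = Φ₁ i j)
variable (hsgn : (Φ₂ i₀ j₀).2 = (Φ₁ i₀ j₀).2)

include hoff hsgn

lemma sgn_all : ∀ i j, (Φ₂ i j).2 = (Φ₁ i j).2 := by
  intro i j
  by_cases hp : i = i₀ ∧ j = j₀
  · obtain ⟨hi, hj⟩ := hp; subst hi; subst hj; exact hsgn
  · rw [hoff i j hp]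

lemma Uset_congr {W : Finset (Fin n)} (h1 : (Φ₁ i₀ j₀).1 ∉ W) (h2 : (Φ₂ i₀ j₀).1 ∉ W) :
    Uset Φ₂ W = Uset Φ₁ W := by
  unfold Uset
  apply Finset.filter_congr
  intro i _
  have hfil : Finset.univ.filter (fun j => (Φ₂ i j).2 = true ∧ (Φ₂ i j).1 ∉ W) =
      Finset.univ.filter (fun j => (Φ₁ i j).2 = true ∧ (Φ₁ i j).1 ∉ W) := by
    apply Finset.filter_congr
    intro j _
    by_cases hp : i = i₀ ∧ j = j₀
    · obtain ⟨hi, hj⟩ := hp; subst hi; subst hj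
      constructor
      · rintro ⟨hs, -⟩; exact ⟨by rw [← hsgn]; exact hs, h1⟩
      · rintro ⟨hs, -⟩; exact ⟨by rw [hsgn]; exact hs, h2⟩
    · rw [hoff i j hp]
  rw [hfil]
  constructor <;> rintro ⟨hc, hneg⟩ <;> refine ⟨hc, ?_⟩ <;> intro j hsj
  · by_cases hp : i = i₀ ∧ j = j₀
    · obtain ⟨hi, hj⟩ := hp; subst hi; subst hj; exact h1
    · rw [← hoff i j hp]; exact hneg j (by rw [hoff i j hp]; exact hsj)
  · by_cases hp : i = i₀ ∧ j = j₀
    · obtain ⟨hi, hj⟩ := hp; subst hi; subst hj; exact h2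
    · rw [hoff i j hp]; exact hneg j (by rw [← hoff i j hp]; exact hsj)

lemma Ux_congr {W : Finset (Fin n)} (h1 : (Φ₁ i₀ j₀).1 ∉ W) (h2 : (Φ₂ i₀ j₀).1 ∉ W)
    (hU : (Φ₁ i₀ j₀).2 = true → i₀ ∉ Uset Φ₁ W) (x : Fin n) :
    Ux Φ₂ W x = Ux Φ₁ W x := by
  unfold Ux
  rw [Uset_congr hoff hsgn h1 h2]
  congr 1
  apply Finset.filter_congr
  intro i hi
  by_cases hii : i = i₀
  · have hns : (Φ₁ i₀ j₀).2 = false := by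
      by_contra hcon
      exact hU (by revert hcon; cases (Φ₁ i₀ j₀).2 <;> simp) (hii ▸ hi)
    have hns2 : (Φ₂ i₀ j₀).2 = false := by rw [hsgn]; exact hns
    constructor
    · rintro ⟨j, hj⟩
      by_cases hjj : j = j₀
      · exfalso; rw [hii, hjj] at hj; rw [hj] at hns2; simp at hns2
      · exact ⟨j, by rw [← hoff i j (fun hc => hjj hc.2)]; exact hj⟩
    · rintro ⟨j, hj⟩
      by_cases hjj : j = j₀
      · exfalso; rw [hii, hjj] at hj; rw [hj] at hns; simp at hns
      · exact ⟨j, by rw [hoff i j (fun hc => hjj hc.2)]; exact hj⟩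
  · constructor <;> rintro ⟨j, hj⟩
    · exact ⟨j, by rw [← hoff i j (fun hc => hii hc.1)]; exact hj⟩
    · exact ⟨j, by rw [hoff i j (fun hc => hii hc.1)]; exact hj⟩

lemma pi0_congr (hnc : ¬(i₀ ∈ Uset Φ₁ ∅ ∧ (Φ₁ i₀ j₀).2 = true)) : pi0 Φ₂ = pi0 Φ₁ := by
  have hUe : Uset Φ₂ ∅ = Uset Φ₁ ∅ :=
    Uset_congr hoff hsgn (Finset.notMem_empty _) (Finset.notMem_empty _)
  funext i j
  unfold pi0
  by_cases hp : i = i₀ ∧ j = j₀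
  · obtain ⟨hi, hj⟩ := hp; subst hi; subst hj
    rw [if_neg, if_neg hnc]
    · exact congrArg Sum.inl hsgn
    · rintro ⟨hu, hpos⟩
      exact hnc ⟨by rw [← hUe]; exact hu, by rw [← hsgn]; exact hpos⟩
  · rw [hoff i j hp, hUe]

lemma stepE_congr {W : Finset (Fin n)} (h1 : (Φ₁ i₀ j₀).1 ∉ W) (h2 : (Φ₂ i₀ j₀).1 ∉ W) :
    stepE Φ₂ W = stepE Φ₁ W := by
  unfold stepE
  apply Finset.filter_congr
  intro i _
  have hA : allNeg Φ₂ i ↔ allNeg Φ₁ i := by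
    unfold allNeg
    constructor <;> intro h j <;> [rw [← sgn_all hoff hsgn]; rw [sgn_all hoff hsgn]] <;>
      exact h j
  rw [hA]
  constructor <;> rintro ⟨ha, hav⟩ <;> refine ⟨ha, ?_⟩ <;> intro j
  · by_cases hp : i = i₀ ∧ j = j₀
    · obtain ⟨hi, hj⟩ := hp; subst hi; subst hj; exact h1
    · rw [← hoff i j hp]; exact hav j
  · by_cases hp : i = i₀ ∧ j = j₀
    · obtain ⟨hi, hj⟩ := hp; subst hi; subst hj; exact h2
    · rw [hoff i j hp]; exact hav j

/-- Master congruence lemma for a single active step. -/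
lemma active_congr (st : P1State n m k) (hE : (stepE Φ₁ st.Z).Nonempty) (hk : 0 < k)
    (h1 : (Φ₁ i₀ j₀).1 ∉ st.Z) (h2 : (Φ₂ i₀ j₀).1 ∉ st.Z)
    (hU : (Φ₁ i₀ j₀).2 = true → i₀ ∉ Uset Φ₁ st.Z)
    (hnc : ¬(i₀ ∈ Uset Φ₁ ∅ ∧ (Φ₁ i₀ j₀).2 = true))
    (hnr : ¬(i₀ = stepPhi Φ₁ st.Z hE ∧ j₀.val < k1 k)) :
    ∃ hE₂ : (stepE Φ₂ st.Z).Nonempty,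
      (activeOut Φ₂ st hE₂ hk).Z = (activeOut Φ₁ st hE hk).Z ∧
      (activeOut Φ₂ st hE₂ hk).lastPhi = (activeOut Φ₁ st hE hk).lastPhi ∧
      (activeOut Φ₂ st hE₂ hk).lastZ = (activeOut Φ₁ st hE hk).lastZ ∧
      ((Φ₁ i₀ j₀).1 ∉ (activeOut Φ₁ st hE hk).Z →
       (Φ₂ i₀ j₀).1 ∉ (activeOut Φ₁ st hE hk).Z →
       ((Φ₁ i₀ j₀).2 = true → i₀ ∉ Uset Φ₁ (activeOut Φ₁ st hE hk).Z) →
        (activeOut Φ₂ st hE₂ hk).pi = (activeOut Φ₁ st hE hk).pi) := by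
  have hEeq : stepE Φ₂ st.Z = stepE Φ₁ st.Z := stepE_congr hoff hsgn h1 h2
  have hE₂ : (stepE Φ₂ st.Z).Nonempty := hEeq ▸ hE
  have hφ : stepPhi Φ₂ st.Z hE₂ = stepPhi Φ₁ st.Z hE := min'_congr hEeq hE₂ hE
  have hk1k : k1 k ≤ k := by unfold k1; omega
  have hJeq : selJ Φ₂ st.Z (stepPhi Φ₂ st.Z hE₂) = selJ Φ₁ st.Z (stepPhi Φ₁ st.Z hE) := by
    rw [hφ]
    unfold selJ
    apply Finset.filter_congr
    intro j _
    by_cases hpj : stepPhi Φ₁ st.Z hE = i₀ ∧ j = j₀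
    · obtain ⟨hi, hj⟩ := hpj; subst hj
      constructor <;> rintro ⟨hlt, -⟩ <;> exact absurd ⟨hi.symm, by omega⟩ hnr
    · rw [hoff _ _ hpj, Ux_congr hoff hsgn h1 h2 hU]
  have hjeq : selj hk Φ₂ st.Z (stepPhi Φ₂ st.Z hE₂) =
      selj hk Φ₁ st.Z (stepPhi Φ₁ st.Z hE) := selj_congr hk hJeq
  have hzne : ¬(stepPhi Φ₁ st.Z hE = i₀ ∧
      selj hk Φ₁ st.Z (stepPhi Φ₁ st.Z hE) = j₀) := by
    rintro ⟨hi, hj⟩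
    refine hnr ⟨hi.symm, ?_⟩
    rw [← hj]
    exact selj_lt_k1 hk Φ₁ st.Z _ hk1k
  have hz : (Φ₂ (stepPhi Φ₂ st.Z hE₂) (selj hk Φ₂ st.Z (stepPhi Φ₂ st.Z hE₂))).1 =
      (Φ₁ (stepPhi Φ₁ st.Z hE) (selj hk Φ₁ st.Z (stepPhi Φ₁ st.Z hE))).1 := by
    rw [hjeq, hφ, hoff _ _ hzne]
  have hZeq : (activeOut Φ₂ st hE₂ hk).Z = (activeOut Φ₁ st hE hk).Z := by
    rw [activeOut_Z, activeOut_Z, hz]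
  refine ⟨hE₂, hZeq, by rw [activeOut, activeOut, hφ], by rw [activeOut_lastZ,
    activeOut_lastZ, hz], ?_⟩
  intro h1' h2' hU'
  have hUeq : Uset Φ₂ (activeOut Φ₁ st hE hk).Z = Uset Φ₁ (activeOut Φ₁ st hE hk).Z :=
    Uset_congr hoff hsgn h1' h2'
  have hpi0 : pi0 Φ₂ = pi0 Φ₁ := pi0_congr hoff hsgn hnc
  funext i j
  rw [activeOut_pi, activeOut_pi, hZeq, hφ, hUeq, hpi0]
  by_cases hp : i = i₀ ∧ j = j₀
  · obtain ⟨hi, hj⟩ := hp; subst hi; subst hj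
    rw [if_neg, if_neg]
    · rintro (hc1 | hc2 | hc3)
      · exact hnr ⟨hc1.1, hc1.2⟩
      · exact h1' hc2
      · exact hU' (by rw [← pi0_inl_sign' hc3.2]) hc3.1
    · rintro (hc1 | hc2 | hc3)
      · exact hnr ⟨hc1.1, hc1.2⟩
      · exact h2' hc2
      · exact hU' (by rw [← pi0_inl_sign' hc3.2]) hc3.1
  · rw [hoff i j hp]

/-- The replacement lemma: changing the literal at one position that is still
unrevealed at time `S` (to a variable outside `Z_S`, keeping the sign) does not
change the first `S` steps of the process. -/
lemma repl (S : ℕ) (hunrev : (p1 Φ₁ S).pi i₀ j₀ = Sum.inl (Φ₁ i₀ j₀).2)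
    (h2 : (Φ₂ i₀ j₀).1 ∉ (p1 Φ₁ S).Z) :
    ∀ r, r ≤ S → p1 Φ₂ r = p1 Φ₁ r := by
  have hnc : ¬(i₀ ∈ Uset Φ₁ ∅ ∧ (Φ₁ i₀ j₀).2 = true) := by
    rintro ⟨hu, hpos⟩
    have h0 : (p1 Φ₁ 0).pi i₀ j₀ = Sum.inl (Φ₁ i₀ j₀).2 := unrev_mono (Nat.zero_le S) hunrev
    have : pi0 Φ₁ i₀ j₀ = Sum.inr (Φ₁ i₀ j₀) := by unfold pi0; rw [if_pos ⟨hu, hpos⟩]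
    rw [show (p1 Φ₁ 0).pi i₀ j₀ = pi0 Φ₁ i₀ j₀ from rfl, this] at h0
    exact absurd h0 (by simp)
  have hpi0 : pi0 Φ₂ = pi0 Φ₁ := pi0_congr hoff hsgn hnc
  intro r hr
  induction r with
  | zero => rw [p1_zero, p1_zero, hpi0]
  | succ r ih =>
    have hrS : r ≤ S := le_trans (Nat.le_succ r) hr
    have ihe := ih hrS
    rw [p1_succ, p1_succ, ihe]
    have hur1 : (p1 Φ₁ (r + 1)).pi i₀ j₀ = Sum.inl (Φ₁ i₀ j₀).2 := unrev_mono hr hunrev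
    have hur : (p1 Φ₁ r).pi i₀ j₀ = Sum.inl (Φ₁ i₀ j₀).2 := unrev_mono hrS hunrev
    have h1r1 : (Φ₁ i₀ j₀).1 ∉ (p1 Φ₁ (r + 1)).Z := unrev_not_mem_Z hur1
    have h1r : (Φ₁ i₀ j₀).1 ∉ (p1 Φ₁ r).Z := fun hm => h1r1 (Z_mono_succ Φ₁ r hm)
    have h2r1 : (Φ₂ i₀ j₀).1 ∉ (p1 Φ₁ (r + 1)).Z := fun hm => h2 (Z_mono hr hm)
    have h2r : (Φ₂ i₀ j₀).1 ∉ (p1 Φ₁ r).Z := fun hm => h2r1 (Z_mono_succ Φ₁ r hm)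
    have hU : (Φ₁ i₀ j₀).2 = true → i₀ ∉ Uset Φ₁ (p1 Φ₁ r).Z := by
      intro hpos hmem
      have := Uset_pos_rev hmem hpos
      rw [hur] at this
      exact absurd this (by simp)
    by_cases hst : (p1 Φ₁ r).stopped = true
    · rw [p1step_of_stopped Φ₂ hst, p1step_of_stopped Φ₁ hst]
    by_cases hE : (stepE Φ₁ (p1 Φ₁ r).Z).Nonempty
    · by_cases hk0 : 0 < k
      · -- active step
        have hact1 : p1step Φ₁ (p1 Φ₁ r) = activeOut Φ₁ (p1 Φ₁ r) hE hk0 :=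
          p1step_active Φ₁ hst hE hk0
        have hnr : ¬(i₀ = stepPhi Φ₁ (p1 Φ₁ r).Z hE ∧ j₀.val < k1 k) := by
          rintro ⟨hiφ, hjk⟩
          have hrev : (p1 Φ₁ (r + 1)).pi i₀ j₀ = Sum.inr (Φ₁ i₀ j₀) := by
            rw [p1_succ, hact1, activeOut_pi, if_pos (Or.inl ⟨hiφ, hjk⟩)]
          rw [hur1] at hrev
          exact absurd hrev (by simp)
        obtain ⟨hE₂, hZ, hφ, hlz, hpi⟩ :=
          active_congr hoff hsgn (p1 Φ₁ r) hE hk0 h1r h2r hU hnc hnr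
        have hU' : (Φ₁ i₀ j₀).2 = true →
            i₀ ∉ Uset Φ₁ (activeOut Φ₁ (p1 Φ₁ r) hE hk0).Z := by
          intro hpos hmem
          have hmem' : i₀ ∈ Uset Φ₁ (p1 Φ₁ (r + 1)).Z := by
            rw [p1_succ, hact1]; exact hmem
          have := Uset_pos_rev hmem' hpos
          rw [hur1] at this
          exact absurd this (by simp)
        have h1a : (Φ₁ i₀ j₀).1 ∉ (activeOut Φ₁ (p1 Φ₁ r) hE hk0).Z := by
          rw [← hact1, ← p1_succ]; exact h1r1
        have h2a : (Φ₂ i₀ j₀).1 ∉ (activeOut Φ₁ (p1 Φ₁ r) hE hk0).Z := by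
          rw [← hact1, ← p1_succ]; exact h2r1
        rw [p1step_active Φ₂ hst hE₂ hk0, hact1]
        exact P1State.ext' hZ (hpi h1a h2a hU') hφ hlz rfl
      · rw [p1step_of_notk Φ₂ hst (stepE_congr hoff hsgn h1r h2r ▸ hE) hk0,
          p1step_of_notk Φ₁ hst hE hk0]
    · rw [p1step_of_notE Φ₂ hst (by rw [stepE_congr hoff hsgn h1r h2r]; exact hE),
        p1step_of_notE Φ₁ hst hE]

/-- The replacement lemma at the step where the original variable enters `Z`:
the non-`pi` data of step `S+1` also agree, provided the position is in the
second half of its clause. -/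
lemma repl_step (S : ℕ) (hunrev : (p1 Φ₁ S).pi i₀ j₀ = Sum.inl (Φ₁ i₀ j₀).2)
    (h2 : (Φ₂ i₀ j₀).1 ∉ (p1 Φ₁ S).Z) (hj2nd : k1 k ≤ j₀.val) :
    (p1 Φ₂ (S + 1)).Z = (p1 Φ₁ (S + 1)).Z ∧
    (p1 Φ₂ (S + 1)).lastZ = (p1 Φ₁ (S + 1)).lastZ := by
  have hnc : ¬(i₀ ∈ Uset Φ₁ ∅ ∧ (Φ₁ i₀ j₀).2 = true) := by
    rintro ⟨hu, hpos⟩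
    have h0 : (p1 Φ₁ 0).pi i₀ j₀ = Sum.inl (Φ₁ i₀ j₀).2 :=
      unrev_mono (Nat.zero_le S) hunrev
    have : pi0 Φ₁ i₀ j₀ = Sum.inr (Φ₁ i₀ j₀) := by unfold pi0; rw [if_pos ⟨hu, hpos⟩]
    rw [show (p1 Φ₁ 0).pi i₀ j₀ = pi0 Φ₁ i₀ j₀ from rfl, this] at h0
    exact absurd h0 (by simp)
  have hrepl : p1 Φ₂ S = p1 Φ₁ S := repl hoff hsgn S hunrev h2 S le_rfl
  rw [p1_succ, p1_succ, hrepl]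
  have h1 : (Φ₁ i₀ j₀).1 ∉ (p1 Φ₁ S).Z := unrev_not_mem_Z hunrev
  have hU : (Φ₁ i₀ j₀).2 = true → i₀ ∉ Uset Φ₁ (p1 Φ₁ S).Z := by
    intro hpos hmem
    have := Uset_pos_rev hmem hpos
    rw [hunrev] at this
    exact absurd this (by simp)
  by_cases hst : (p1 Φ₁ S).stopped = true
  · rw [p1step_of_stopped Φ₂ hst, p1step_of_stopped Φ₁ hst]; exact ⟨rfl, rfl⟩
  by_cases hE : (stepE Φ₁ (p1 Φ₁ S).Z).Nonempty
  · by_cases hk0 : 0 < k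
    · have hnr : ¬(i₀ = stepPhi Φ₁ (p1 Φ₁ S).Z hE ∧ j₀.val < k1 k) := by
        rintro ⟨-, hjk⟩; omega
      obtain ⟨hE₂, hZ, hφ, hlz, -⟩ :=
        active_congr hoff hsgn (p1 Φ₁ S) hE hk0 h1 h2 hU hnc hnr
      rw [p1step_active Φ₂ hst hE₂ hk0, p1step_active Φ₁ hst hE hk0]
      exact ⟨hZ, hlz⟩
    · rw [p1step_of_notk Φ₂ hst (stepE_congr hoff hsgn h1 h2 ▸ hE) hk0,
        p1step_of_notk Φ₁ hst hE hk0]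
      exact ⟨rfl, rfl⟩
  · rw [p1step_of_notE Φ₂ hst (by rw [stepE_congr hoff hsgn h1 h2]; exact hE),
      p1step_of_notE Φ₁ hst hE]
    exact ⟨rfl, rfl⟩

end Repl

/-! ### Entry times and clean positions -/

/-- The first time at which the variable of position `(i,j)` belongs to `Z`. -/
noncomputable def entryT (Φ : Formula n m k) (i : Fin m) (j : Fin k) : ℕ :=
  sInf {s | (Φ i j).1 ∈ (p1 Φ s).Z}

/-- A position is clean if it is unrevealed just before its variable enters `Z`. -/
def IsClean (Φ : Formula n m k) (i : Fin m) (j : Fin k) : Prop :=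
  (p1 Φ (entryT Φ i j - 1)).pi i j = Sum.inl ((Φ i j).2)

lemma not_mem_Z_of_lt_entry {Φ : Formula n m k} {i : Fin m} {j : Fin k} {r : ℕ}
    (h : r < entryT Φ i j) : (Φ i j).1 ∉ (p1 Φ r).Z :=
  Nat.notMem_of_lt_sInf h

lemma entry_spec {Φ : Formula n m k} {t : ℕ} {i : Fin m} {j : Fin k}
    (h : (Φ i j).1 ∈ (p1 Φ t).Z) :
    1 ≤ entryT Φ i j ∧ entryT Φ i j ≤ t ∧
    (p1 Φ (entryT Φ i j)).lastZ = some ((Φ i j).1) := by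
  have hne : (Φ i j).1 ∈ (p1 Φ (entryT Φ i j)).Z :=
    Nat.sInf_mem (s := {s | (Φ i j).1 ∈ (p1 Φ s).Z}) ⟨t, h⟩
  have hle : entryT Φ i j ≤ t :=
    Nat.sInf_le (show t ∈ {s | (Φ i j).1 ∈ (p1 Φ s).Z} from h)
  have h1 : 1 ≤ entryT Φ i j := by
    by_contra hc
    have h0 : entryT Φ i j = 0 := by omega
    rw [h0] at hne
    simp [p1_zero] at hne
  refine ⟨h1, hle, ?_⟩
  obtain ⟨e', he'⟩ : ∃ e', entryT Φ i j = e' + 1 :=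
    ⟨entryT Φ i j - 1, by omega⟩
  have hnot : (Φ i j).1 ∉ (p1 Φ e').Z := not_mem_Z_of_lt_entry (by omega)
  rw [he'] at hne ⊢
  rcases p1step_cases Φ (p1 Φ e') with ⟨heq, _⟩ | ⟨hZ, _⟩ | ⟨hE, hk, hst, heq⟩
  · rw [p1_succ, heq] at hne
    exact absurd hne hnot
  · have hsame : (p1 Φ (e' + 1)).Z = (p1 Φ e').Z := by rw [p1_succ]; exact hZ
    rw [hsame] at hne
    exact absurd hne hnot
  · rw [p1_succ, heq] at hne ⊢
    rw [activeOut_Z] at hne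
    rcases Finset.mem_insert.mp hne with hv | hv
    · rw [activeOut_lastZ, ← hv]
    · exact absurd hv hnot

lemma nonclean_core {Φ : Formula n m k} {t : ℕ} {i : Fin m} {j : Fin k}
    (hj2 : k1 k ≤ j.val) (hm : (Φ i j).1 ∈ (p1 Φ t).Z) (hnc : ¬IsClean Φ i j) :
    ∃ r, r < entryT Φ i j ∧ i ∈ Uset Φ (p1 Φ r).Z ∧ (Φ i j).2 = true := by
  obtain ⟨h1e, hle, hlz⟩ := entry_spec hm
  have hrev : (p1 Φ (entryT Φ i j - 1)).pi i j = Sum.inr (Φ i j) := by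
    rcases pi_cases Φ (entryT Φ i j - 1) i j with h | h
    · exact h
    · exact absurd h hnc
  have hRne : entryT Φ i j - 1 ∈ {r | (p1 Φ r).pi i j = Sum.inr (Φ i j)} := hrev
  have hrm : (p1 Φ (sInf {r | (p1 Φ r).pi i j = Sum.inr (Φ i j)})).pi i j
      = Sum.inr (Φ i j) := Nat.sInf_mem ⟨_, hRne⟩
  have hrle : sInf {r | (p1 Φ r).pi i j = Sum.inr (Φ i j)} ≤ entryT Φ i j - 1 :=
    Nat.sInf_le hRne
  set r := sInf {r | (p1 Φ r).pi i j = Sum.inr (Φ i j)} with hrdef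
  have hrlt : r < entryT Φ i j := by omega
  refine ⟨r, hrlt, ?_⟩
  match hr0 : r with
  | 0 =>
    have hrm0 : pi0 Φ i j = Sum.inr (Φ i j) := hrm
    unfold pi0 at hrm0
    by_cases hcond : i ∈ Uset Φ ∅ ∧ (Φ i j).2 = true
    · exact ⟨by rw [show (p1 Φ 0).Z = ∅ from rfl]; exact hcond.1, hcond.2⟩
    · rw [if_neg hcond] at hrm0
      exact absurd hrm0 (by simp)
  | r' + 1 =>
    have hr'not : (p1 Φ r').pi i j ≠ Sum.inr (Φ i j) := by
      have := Nat.notMem_of_lt_sInf (show r' < sInf {r | (p1 Φ r).pi i j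
        = Sum.inr (Φ i j)} by omega)
      exact this
    rcases p1step_cases Φ (p1 Φ r') with ⟨heq, _⟩ | ⟨_, hpi, _⟩ | ⟨hE, hk, hst, heq⟩
    · rw [p1_succ, heq] at hrm
      exact absurd hrm hr'not
    · rw [p1_succ, hpi] at hrm
      exact absurd hrm hr'not
    · rw [p1_succ, heq, activeOut_pi] at hrm
      split at hrm
      · next hcond =>
        rcases hcond with ⟨-, hjlt⟩ | hin | ⟨hu, hp0⟩
        · omega
        · exfalso
          have : entryT Φ i j ≤ r' + 1 := Nat.sInf_le (by
            show (Φ i j).1 ∈ (p1 Φ (r' + 1)).Z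
            rw [p1_succ, heq]; exact hin)
          omega
        · refine ⟨?_, (pi0_inl_sign' hp0).symm⟩
          have : (p1 Φ (r' + 1)).Z = (activeOut Φ (p1 Φ r') hE hk).Z := by
            rw [p1_succ, heq]
          rw [this]
          exact hu
      · exact absurd hrm hr'not

/-- At most one position of a clause (among second-half positions whose variable
enters `Z`) can fail to be clean. -/
lemma nonclean_unique {Φ : Formula n m k} {t : ℕ} {i : Fin m} {j j' : Fin k}
    (hj2 : k1 k ≤ j.val) (hj2' : k1 k ≤ j'.val)
    (hm : (Φ i j).1 ∈ (p1 Φ t).Z) (hm' : (Φ i j').1 ∈ (p1 Φ t).Z)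
    (hnc : ¬IsClean Φ i j) (hnc' : ¬IsClean Φ i j') : j = j' := by
  obtain ⟨r, hre, hU, hs⟩ := nonclean_core hj2 hm hnc
  obtain ⟨r', hre', hU', hs'⟩ := nonclean_core hj2' hm' hnc'
  have key : ∀ (ja jb : Fin k) (ra : ℕ), i ∈ Uset Φ (p1 Φ ra).Z →
      (Φ i ja).2 = true → (Φ i jb).2 = true →
      (Φ i ja).1 ∉ (p1 Φ ra).Z → (Φ i jb).1 ∉ (p1 Φ ra).Z → ja = jb := by
    intro ja jb ra hUm hsa hsb hna hnb
    by_contra hne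
    unfold Uset at hUm
    rw [Finset.mem_filter] at hUm
    obtain ⟨-, hcard, -⟩ := hUm
    have h2 : 1 < (Finset.univ.filter
        (fun j => (Φ i j).2 = true ∧ (Φ i j).1 ∉ (p1 Φ ra).Z)).card := by
      apply Finset.one_lt_card.mpr
      exact ⟨ja, by simp [hsa, hna], jb, by simp [hsb, hnb], hne⟩
    omega
  rcases le_total r r' with hrr | hrr
  · exact key j j' r hU hs hs' (not_mem_Z_of_lt_entry hre)
      (not_mem_Z_of_lt_entry (lt_of_le_of_lt hrr hre'))
  · exact (key j' j r' hU' hs' hs (not_mem_Z_of_lt_entry hre')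
      (not_mem_Z_of_lt_entry (lt_of_le_of_lt hrr hre))).symm

/-! ### The witness events and the counting lemma -/

/-- Canonical embedding of `Fin (n - T)` into the complement of a set of size `≤ T`. -/
noncomputable def embC (T : ℕ) (W : Finset (Fin n)) (hW : W.card ≤ T) (a : Fin (n - T)) :
    Fin n :=
  ((Finset.univ : Finset (Fin n)) \ W).orderEmbOfCardLe
    (by
      rw [Finset.card_sdiff_of_subset (Finset.subset_univ _), Finset.card_univ, Fintype.card_fin]
      omega) a

lemma embC_not_mem (T : ℕ) (W : Finset (Fin n)) (hW : W.card ≤ T) (a : Fin (n - T)) :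
    embC T W hW a ∉ W := by
  have := Finset.orderEmbOfCardLe_mem ((Finset.univ : Finset (Fin n)) \ W)
    (by rw [Finset.card_sdiff_of_subset (Finset.subset_univ _), Finset.card_univ, Fintype.card_fin]
        omega) a
  rw [Finset.mem_sdiff] at this
  exact this.2

lemma embC_inj (T : ℕ) (W : Finset (Fin n)) (hW : W.card ≤ T) {a a' : Fin (n - T)}
    (h : embC T W hW a = embC T W hW a') : a = a' := by
  exact (Finset.orderEmbOfCardLe _ _).injective h

/-- The event that every marked position is clean with the prescribed entry step. -/
noncomputable def Ew (n T : ℕ) (P : Finset ((Fin m × Fin k) × Fin (T + 1))) :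
    Finset (Formula n m k) :=
  Finset.univ.filter (fun Φ => ∀ q ∈ P,
    (p1 Φ (q.2.val - 1)).pi q.1.1 q.1.2 = Sum.inl ((Φ q.1.1 q.1.2).2) ∧
    (p1 Φ q.2.val).lastZ = some ((Φ q.1.1 q.1.2).1))

lemma mem_Ew {T : ℕ} {P : Finset ((Fin m × Fin k) × Fin (T + 1))} {Φ : Formula n m k} :
    Φ ∈ Ew n T P ↔ ∀ q ∈ P,
      (p1 Φ (q.2.val - 1)).pi q.1.1 q.1.2 = Sum.inl ((Φ q.1.1 q.1.2).2) ∧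
      (p1 Φ q.2.val).lastZ = some ((Φ q.1.1 q.1.2).1) := by
  unfold Ew
  simp only [Finset.mem_filter, Finset.mem_univ, true_and]

/-- One-step counting: removing a position of maximal step from the witness. -/
lemma step_count (T : ℕ) (P : Finset ((Fin m × Fin k) × Fin (T + 1)))
    (q : (Fin m × Fin k) × Fin (T + 1)) (hq : q ∈ P)
    (hP : ∀ q' ∈ P, 1 ≤ q'.2.val ∧ k1 k ≤ q'.1.2.val)
    (hinj : ∀ q' ∈ P, ∀ q'' ∈ P, q'.1 = q''.1 → q' = q'')
    (hmax : ∀ q' ∈ P, q'.2.val ≤ q.2.val) :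
    (Ew n T P).card * (n - T)
      ≤ (Ew n T (P.erase q)).card := by
  classical
  obtain ⟨hs1, hj2⟩ := hP q hq
  set i₀ := q.1.1
  set j₀ := q.1.2
  set s := q.2.val with hsdef
  have hsT : s ≤ T := by have := q.2.isLt; omega
  -- the replacement map
  have hWcard : ∀ Φ : Formula n m k, (p1 Φ (s - 1)).Z.card ≤ T :=
    fun Φ => le_trans (card_Z_le Φ (s - 1)) (by have := q.2.isLt; omega)
  set F : Formula n m k × Fin (n - T) → Formula n m k :=
    fun Φa => fun i j =>
      if i = i₀ ∧ j = j₀ then (embC T ((p1 Φa.1 (s - 1)).Z) (hWcard Φa.1) Φa.2, (Φa.1 i₀ j₀).2)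
      else Φa.1 i j
    with hF
  have hoffF : ∀ (Φ : Formula n m k) (a : Fin (n - T)) (i : Fin m) (j : Fin k),
      ¬(i = i₀ ∧ j = j₀) → F (Φ, a) i j = Φ i j := by
    intro Φ a i j hij
    rw [hF]
    dsimp only
    rw [if_neg hij]
  have hatF : ∀ (Φ : Formula n m k) (a : Fin (n - T)),
      F (Φ, a) i₀ j₀ = (embC T ((p1 Φ (s - 1)).Z) (hWcard Φ) a, (Φ i₀ j₀).2) := by
    intro Φ a
    rw [hF]
    dsimp only
    rw [if_pos ⟨rfl, rfl⟩]
  -- facts for formulas in the event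
  have hconstr : ∀ Φ ∈ Ew n T P,
      (p1 Φ (s - 1)).pi i₀ j₀ = Sum.inl ((Φ i₀ j₀).2) ∧
      (p1 Φ s).lastZ = some ((Φ i₀ j₀).1) := fun Φ hΦ => mem_Ew.mp hΦ q hq
  -- main replacement properties
  have hmain : ∀ Φ ∈ Ew n T P, ∀ a : Fin (n - T),
      (∀ r ≤ s - 1, p1 (F (Φ, a)) r = p1 Φ r) ∧
      (p1 (F (Φ, a)) s).Z = (p1 Φ s).Z ∧
      (p1 (F (Φ, a)) s).lastZ = (p1 Φ s).lastZ := by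
    intro Φ hΦ a
    obtain ⟨hunrev, hlz⟩ := hconstr Φ hΦ
    have hoff : ∀ i j, ¬(i = i₀ ∧ j = j₀) → F (Φ, a) i j = Φ i j := hoffF Φ a
    have hsgn : (F (Φ, a) i₀ j₀).2 = (Φ i₀ j₀).2 := by rw [hatF Φ a]
    have h2 : (F (Φ, a) i₀ j₀).1 ∉ (p1 Φ (s - 1)).Z := by
      rw [hatF Φ a]
      exact embC_not_mem T _ (hWcard Φ) a
    have hrepl := repl hoff hsgn (s - 1) hunrev h2
    have hstep := repl_step hoff hsgn (s - 1) hunrev h2 hj2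
    rw [show s - 1 + 1 = s by omega] at hstep
    exact ⟨hrepl, hstep.1, hstep.2⟩
  -- well-definedness
  have hmaps : ∀ p ∈ (Ew n T P) ×ˢ (Finset.univ : Finset (Fin (n - T))),
      F p ∈ Ew n T (P.erase q) := by
    rintro ⟨Φ, a⟩ hp
    rw [Finset.mem_product] at hp
    obtain ⟨hΦ, -⟩ := hp
    obtain ⟨hhist, hZs, hlzs⟩ := hmain Φ hΦ a
    rw [mem_Ew]
    intro q' hq'
    have hq'P : q' ∈ P := Finset.mem_of_mem_erase hq'
    have hq'ne : q'.1 ≠ q.1 := by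
      intro hcon
      exact Finset.notMem_erase q P (hinj q' hq'P q hq hcon ▸ hq')
    have hne' : ¬(q'.1.1 = i₀ ∧ q'.1.2 = j₀) := by
      rintro ⟨ha, hb⟩
      exact hq'ne (Prod.ext ha hb)
    have hcoeq : F (Φ, a) q'.1.1 q'.1.2 = Φ q'.1.1 q'.1.2 := hoffF Φ a _ _ hne'
    obtain ⟨hc1, hc2⟩ := mem_Ew.mp hΦ q' hq'P
    have hs'le : q'.2.val ≤ s := hmax q' hq'P
    have hs'1 : 1 ≤ q'.2.val := (hP q' hq'P).1
    constructor
    · rw [hhist (q'.2.val - 1) (by omega), hcoeq]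
      exact hc1
    · rw [hcoeq]
      rcases Nat.lt_or_ge q'.2.val s with hlt | hge
      · have := hhist q'.2.val (by omega)
        rw [this]
        exact hc2
      · have hseq : q'.2.val = s := by omega
        rw [hseq, hlzs]
        rw [hseq] at hc2
        exact hc2
  -- injectivity
  have hinjF : Set.InjOn F ↑((Ew n T P) ×ˢ (Finset.univ : Finset (Fin (n - T)))) := by
    rintro ⟨Φ₁, a₁⟩ hp1 ⟨Φ₂, a₂⟩ hp2 heq
    rw [Finset.mem_coe, Finset.mem_product] at hp1 hp2
    obtain ⟨hΦ₁, -⟩ := hp1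
    obtain ⟨hΦ₂, -⟩ := hp2
    obtain ⟨hhist₁, hZ₁, hlz₁⟩ := hmain Φ₁ hΦ₁ a₁
    obtain ⟨hhist₂, hZ₂, hlz₂⟩ := hmain Φ₂ hΦ₂ a₂
    obtain ⟨hu₁, hl₁⟩ := hconstr Φ₁ hΦ₁
    obtain ⟨hu₂, hl₂⟩ := hconstr Φ₂ hΦ₂
    -- recover lastZ of the common image
    have hval : (Φ₁ i₀ j₀).1 = (Φ₂ i₀ j₀).1 := by
      have e1 : (p1 (F (Φ₁, a₁)) s).lastZ = some ((Φ₁ i₀ j₀).1) := by rw [hlz₁]; exact hl₁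
      have e2 : (p1 (F (Φ₂, a₂)) s).lastZ = some ((Φ₂ i₀ j₀).1) := by rw [hlz₂]; exact hl₂
      rw [heq] at e1
      rw [e1] at e2
      exact Option.some_inj.mp e2
    have hsgn12 : (Φ₁ i₀ j₀).2 = (Φ₂ i₀ j₀).2 := by
      have e1 : (F (Φ₁, a₁) i₀ j₀).2 = (Φ₁ i₀ j₀).2 := by rw [hatF Φ₁ a₁]
      have e2 : (F (Φ₂, a₂) i₀ j₀).2 = (Φ₂ i₀ j₀).2 := by rw [hatF Φ₂ a₂]
      rw [heq] at e1
      rw [e1] at e2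
      exact e2
    have hΦeq : Φ₁ = Φ₂ := by
      funext i j
      by_cases hij : i = i₀ ∧ j = j₀
      · obtain ⟨hi, hj⟩ := hij; subst hi; subst hj
        exact Prod.ext hval hsgn12
      · have e1 : F (Φ₁, a₁) i j = Φ₁ i j := hoffF Φ₁ a₁ i j hij
        have e2 : F (Φ₂, a₂) i j = Φ₂ i j := hoffF Φ₂ a₂ i j hij
        rw [heq] at e1
        rw [e1] at e2
        exact e2
    subst hΦeq
    have haeq : a₁ = a₂ := by
      apply embC_inj T ((p1 Φ₁ (s - 1)).Z) (hWcard Φ₁)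
      have e1 : (F (Φ₁, a₁) i₀ j₀).1 = embC T ((p1 Φ₁ (s - 1)).Z) (hWcard Φ₁) a₁ := by
        rw [hatF Φ₁ a₁]
      have e2 : (F (Φ₁, a₂) i₀ j₀).1 = embC T ((p1 Φ₁ (s - 1)).Z) (hWcard Φ₁) a₂ := by
        rw [hatF Φ₁ a₂]
      rw [heq] at e1
      rw [e1] at e2
      exact e2
    rw [haeq]
  have := Finset.card_le_card_of_injOn F hmaps hinjF
  rw [Finset.card_product, Finset.card_univ, Fintype.card_fin] at this
  exact this

/-- Iterated counting over a whole witness. -/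
lemma core_count (T : ℕ) (P : Finset ((Fin m × Fin k) × Fin (T + 1)))
    (hP : ∀ q' ∈ P, 1 ≤ q'.2.val ∧ k1 k ≤ q'.1.2.val)
    (hinj : ∀ q' ∈ P, ∀ q'' ∈ P, q'.1 = q''.1 → q' = q'') :
    (Ew n T P).card * (n - T) ^ P.card
      ≤ Fintype.card (Formula n m k) := by
  classical
  obtain ⟨N, hN⟩ : ∃ N, P.card = N := ⟨P.card, rfl⟩
  induction N generalizing P with
  | zero =>
    rw [Finset.card_eq_zero] at hN
    subst hN
    rw [Finset.card_empty, pow_zero, mul_one]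
    have : Ew n T (∅ : Finset ((Fin m × Fin k) × Fin (T + 1))) = Finset.univ := by
      unfold Ew
      simp
    rw [this, Finset.card_univ]
  | succ N ih =>
    have hne : P.Nonempty := by
      rw [← Finset.card_pos, hN]; omega
    obtain ⟨q, hq, hqmax⟩ := P.exists_max_image (fun q' => q'.2.val) hne
    have hstep := step_count (n := n) T P q hq hP hinj hqmax
    have hcard' : (P.erase q).card = N := by
      rw [Finset.card_erase_of_mem hq, hN]
      omega
    have hih := ih (P.erase q)
      (fun q' hq' => hP q' (Finset.mem_of_mem_erase hq'))
      (fun q' hq' q'' hq'' => hinj q' (Finset.mem_of_mem_erase hq') q''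
        (Finset.mem_of_mem_erase hq''))
      hcard'
    rw [hcard'] at hih
    calc (Ew n T P).card * (n - T) ^ P.card
        = ((Ew n T P).card * (n - T)) * (n - T) ^ N := by
          rw [hN, pow_succ]; ring
      _ ≤ (Ew n T (P.erase q)).card * (n - T) ^ N :=
          Nat.mul_le_mul_right _ hstep
      _ ≤ Fintype.card (Formula n m k) := hih

/-! ### Witnesses -/

/-- Flatten a witness (a set of clauses with marked positions and steps). -/
noncomputable def flatW {T : ℕ}
    (w : Finset (Fin m) × (Fin m → Finset (Fin k × Fin (T + 1)))) :
    Finset ((Fin m × Fin k) × Fin (T + 1)) :=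
  w.1.biUnion (fun i => (w.2 i).image (fun p => ((i, p.1), p.2)))

/-- The set of well-formed witnesses: `N` clauses, each with `K` marked
second-half positions with distinct `j`-components and steps in `[1,T]`. -/
noncomputable def Wgood (m k N K T : ℕ) :
    Finset (Finset (Fin m) × (Fin m → Finset (Fin k × Fin (T + 1)))) :=
  Finset.univ.filter (fun w =>
    w.1.card = N ∧ (∀ i ∉ w.1, w.2 i = ∅) ∧
    ∀ i ∈ w.1, (w.2 i).card = K ∧
      (∀ p ∈ w.2 i, k1 k ≤ p.1.val ∧ 1 ≤ p.2.val) ∧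
      (∀ p ∈ w.2 i, ∀ p' ∈ w.2 i, p.1 = p'.1 → p = p')) 

lemma mem_Wgood {m k N K T : ℕ}
    {w : Finset (Fin m) × (Fin m → Finset (Fin k × Fin (T + 1)))} :
    w ∈ Wgood m k N K T ↔
    (w.1.card = N ∧ (∀ i ∉ w.1, w.2 i = ∅) ∧
      ∀ i ∈ w.1, (w.2 i).card = K ∧
        (∀ p ∈ w.2 i, k1 k ≤ p.1.val ∧ 1 ≤ p.2.val) ∧
        (∀ p ∈ w.2 i, ∀ p' ∈ w.2 i, p.1 = p'.1 → p = p')) := by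
  unfold Wgood
  simp only [Finset.mem_filter, Finset.mem_univ, true_and]

lemma flatW_spec {T N K : ℕ} {w : Finset (Fin m) × (Fin m → Finset (Fin k × Fin (T + 1)))}
    (hw : w ∈ Wgood m k N K T) :
    (∀ q ∈ flatW w, 1 ≤ q.2.val ∧ k1 k ≤ q.1.2.val) ∧
    (∀ q ∈ flatW w, ∀ q' ∈ flatW w, q.1 = q'.1 → q = q') ∧
    (flatW w).card = N * K := by
  rw [mem_Wgood] at hw
  obtain ⟨hN, hempty, hcl⟩ := hw
  have hmem : ∀ q ∈ flatW w, q.1.1 ∈ w.1 ∧ (q.1.2, q.2) ∈ w.2 q.1.1 := by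
    intro q hq
    unfold flatW at hq
    rw [Finset.mem_biUnion] at hq
    obtain ⟨i, hi, hq⟩ := hq
    rw [Finset.mem_image] at hq
    obtain ⟨p, hp, rfl⟩ := hq
    exact ⟨hi, hp⟩
  refine ⟨?_, ?_, ?_⟩
  · intro q hq
    obtain ⟨hi, hp⟩ := hmem q hq
    have := (hcl _ hi).2.1 _ hp
    exact ⟨this.2, this.1⟩
  · intro q hq q' hq' h1
    obtain ⟨hi, hp⟩ := hmem q hq
    obtain ⟨hi', hp'⟩ := hmem q' hq'
    have hii : q.1.1 = q'.1.1 := by rw [h1]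
    have hjj : q.1.2 = q'.1.2 := by rw [h1]
    rw [← hii] at hp'
    have := (hcl _ hi).2.2 _ hp _ hp' (by rw [hjj])
    have h2 : q.2 = q'.2 := by
      have := congrArg Prod.snd this
      exact this
    exact Prod.ext h1 h2
  · unfold flatW
    rw [Finset.card_biUnion]
    · rw [← hN]
      rw [Finset.sum_congr rfl (fun i hi => ?_)]
      · exact (Finset.sum_const (K)).trans (by rw [smul_eq_mul, mul_comm]) 
      · rw [Finset.card_image_of_injOn (fun p _ q _ hpq => ?_), (hcl i hi).1]
        have h1 := congrArg (fun z => z.1.2) hpq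
        have h2 := congrArg (fun z => z.2) hpq
        exact Prod.ext h1 h2
    · intro i hi i' hi' hne
      apply Finset.disjoint_left.mpr
      intro a ha ha'
      rw [Finset.mem_image] at ha ha'
      obtain ⟨p, -, rfl⟩ := ha
      obtain ⟨p', -, he⟩ := ha'
      exact hne (congrArg (fun z => z.1.1) he).symm

/-- Witness extraction: a formula with many bad clauses at time `t` lies in some
witness event. -/
lemma exists_witness {T t N K : ℕ} (ht1 : 1 ≤ t) (htT : t ≤ T) {Φ : Formula n m k}
    (hbad : N ≤ (Finset.univ.filter (fun i : Fin m =>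
      K ≤ (Finset.univ.filter (fun j : Fin k =>
        k1 k ≤ j.val ∧ (Φ i j).1 ∈ (p1 Φ t).Z)).card)).card) :
    ∃ w ∈ Wgood m k N (K - 1) T, Φ ∈ Ew n T (flatW w) := by
  classical
  obtain ⟨I, hIsub, hIcard⟩ := Finset.exists_subset_card_eq hbad
  have hsel : ∀ i : Fin m, ∃ J : Finset (Fin k),
      (i ∈ I → J ⊆ Finset.univ.filter (fun j => k1 k ≤ j.val ∧
        (Φ i j).1 ∈ (p1 Φ t).Z ∧ IsClean Φ i j) ∧ J.card = K - 1) ∧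
      (i ∉ I → J = ∅) := by
    intro i
    by_cases hi : i ∈ I
    · have hIbad := hIsub hi
      rw [Finset.mem_filter] at hIbad
      have hKbad : K ≤ (Finset.univ.filter (fun j : Fin k =>
          k1 k ≤ j.val ∧ (Φ i j).1 ∈ (p1 Φ t).Z)).card := hIbad.2
      have hsplit := Finset.card_filter_add_card_filter_not
        (s := Finset.univ.filter (fun j : Fin k =>
          k1 k ≤ j.val ∧ (Φ i j).1 ∈ (p1 Φ t).Z)) (p := fun j => IsClean Φ i j)
      have hnc1 : ((Finset.univ.filter (fun j : Fin k =>
          k1 k ≤ j.val ∧ (Φ i j).1 ∈ (p1 Φ t).Z)).filter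
          (fun j => ¬IsClean Φ i j)).card ≤ 1 := by
        apply Finset.card_le_one.mpr
        intro a ha b hb
        rw [Finset.mem_filter, Finset.mem_filter] at ha hb
        exact nonclean_unique ha.1.2.1 hb.1.2.1 ha.1.2.2 hb.1.2.2 ha.2 hb.2
      have hclean : K - 1 ≤ ((Finset.univ.filter (fun j : Fin k =>
          k1 k ≤ j.val ∧ (Φ i j).1 ∈ (p1 Φ t).Z)).filter
          (fun j => IsClean Φ i j)).card := by omega
      obtain ⟨J, hJsub, hJcard⟩ := Finset.exists_subset_card_eq hclean
      refine ⟨J, fun _ => ⟨?_, hJcard⟩, fun h => absurd hi h⟩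
      intro j hj
      have := hJsub hj
      rw [Finset.mem_filter, Finset.mem_filter] at this
      rw [Finset.mem_filter]
      exact ⟨this.1.1, this.1.2.1, this.1.2.2, this.2⟩
    · exact ⟨∅, fun h => absurd h hi, fun _ => rfl⟩
  choose Jf hJmem hJempty using hsel
  have hJfacts : ∀ i ∈ I, ∀ j ∈ Jf i, k1 k ≤ j.val ∧
      (Φ i j).1 ∈ (p1 Φ t).Z ∧ IsClean Φ i j := by
    intro i hi j hj
    have := (hJmem i hi).1 hj
    rw [Finset.mem_filter] at this
    exact this.2
  have hentry : ∀ i ∈ I, ∀ j ∈ Jf i, 1 ≤ entryT Φ i j ∧ entryT Φ i j ≤ T ∧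
      (p1 Φ (entryT Φ i j)).lastZ = some ((Φ i j).1) := by
    intro i hi j hj
    obtain ⟨-, hm, -⟩ := hJfacts i hi j hj
    obtain ⟨h1, h2, h3⟩ := entry_spec hm
    exact ⟨h1, le_trans h2 htT, h3⟩
  refine ⟨(I, fun i => (Jf i).image
    (fun j => (j, (⟨min (entryT Φ i j) T, by omega⟩ : Fin (T + 1))))), ?_, ?_⟩
  · rw [mem_Wgood]
    refine ⟨hIcard, ?_, ?_⟩
    · intro i hi
      dsimp only at hi ⊢
      rw [hJempty i hi]
      simp
    · intro i hi
      dsimp only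
      constructor
      · rw [Finset.card_image_of_injOn (fun p _ q _ hpq => congrArg Prod.fst hpq),
          (hJmem i hi).2]
      constructor
      · rintro p hp
        rw [Finset.mem_image] at hp
        obtain ⟨j, hj, rfl⟩ := hp
        refine ⟨(hJfacts i hi j hj).1, ?_⟩
        have := (hentry i hi j hj).1
        have := (hentry i hi j hj).2.1
        simp only []
        omega
      · rintro p hp p' hp' hfst
        rw [Finset.mem_image] at hp hp'
        obtain ⟨j, hj, rfl⟩ := hp
        obtain ⟨j', hj', rfl⟩ := hp'
        simp only [] at hfst
        subst hfst
        rfl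
  · rw [mem_Ew]
    intro q hq
    unfold flatW at hq
    rw [Finset.mem_biUnion] at hq
    obtain ⟨i, hi, hq⟩ := hq
    rw [Finset.mem_image] at hq
    obtain ⟨p, hp, rfl⟩ := hq
    rw [Finset.mem_image] at hp
    obtain ⟨j, hj, rfl⟩ := hp
    obtain ⟨he1, heT, helz⟩ := hentry i hi j hj
    have hmin : min (entryT Φ i j) T = entryT Φ i j := by omega
    dsimp only
    rw [hmin]
    constructor
    · exact (hJfacts i hi j hj).2.2
    · exact helz

/-- Cardinality bound for the witness family. -/
lemma Wgood_card (N K T : ℕ) :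
    (Wgood m k N K T).card ≤ m.choose N * ((k * (T + 1)).choose K) ^ N := by
  classical
  have hD : ((Finset.univ : Finset (Fin k × Fin (T + 1))).powersetCard K).card
      = (k * (T + 1)).choose K := by
    rw [Finset.card_powersetCard, Finset.card_univ, Fintype.card_prod,
      Fintype.card_fin, Fintype.card_fin]
  have hfib := Finset.card_eq_sum_card_fiberwise
    (f := fun w : Finset (Fin m) × (Fin m → Finset (Fin k × Fin (T + 1))) => w.1)
    (s := Wgood m k N K T)
    (t := (Finset.univ : Finset (Fin m)).powersetCard N)
    (fun w hw => by
      rw [Finset.mem_coe, Finset.mem_powersetCard]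
      exact ⟨Finset.subset_univ _, (mem_Wgood.mp hw).1⟩)
  rw [hfib]
  have hbound : ∀ I ∈ (Finset.univ : Finset (Fin m)).powersetCard N,
      ((Wgood m k N K T).filter (fun w => w.1 = I)).card
        ≤ ((k * (T + 1)).choose K) ^ N := by
    intro I hI
    have hIcard : I.card = N := (Finset.mem_powersetCard.mp hI).2
    have hle := Finset.card_le_card_of_injOn
      (f := fun w : Finset (Fin m) × (Fin m → Finset (Fin k × Fin (T + 1))) =>
        (fun i (_ : i ∈ I) => w.2 i))
      (s := (Wgood m k N K T).filter (fun w => w.1 = I))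
      (t := I.pi (fun _ => ((Finset.univ : Finset (Fin k × Fin (T + 1))).powersetCard K)))
      (by
        intro w hw
        rw [Finset.mem_coe, Finset.mem_filter] at hw
        obtain ⟨hwW, hwI⟩ := hw
        rw [Finset.mem_coe, Finset.mem_pi]
        intro i hi
        rw [Finset.mem_powersetCard]
        refine ⟨Finset.subset_univ _, ?_⟩
        exact ((mem_Wgood.mp hwW).2.2 i (hwI ▸ hi)).1)
      (by
        intro w hw w' hw' heq
        rw [Finset.mem_coe, Finset.mem_filter] at hw hw'
        obtain ⟨hwW, hwI⟩ := hw
        obtain ⟨hwW', hwI'⟩ := hw'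
        have h1 : w.1 = w'.1 := by rw [hwI, hwI']
        have h2 : w.2 = w'.2 := by
          funext i
          by_cases hi : i ∈ I
          · exact congrFun (congrFun heq i) hi
          · rw [(mem_Wgood.mp hwW).2.1 i (hwI ▸ hi),
              (mem_Wgood.mp hwW').2.1 i (hwI' ▸ hi)]
        exact Prod.ext h1 h2)
    calc ((Wgood m k N K T).filter (fun w => w.1 = I)).card
        ≤ (I.pi (fun _ => ((Finset.univ : Finset (Fin k × Fin (T + 1))).powersetCard
            K))).card := hle
      _ = ∏ _i ∈ I, ((Finset.univ : Finset (Fin k × Fin (T + 1))).powersetCard K).card :=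
          Finset.card_pi _ _
      _ = ((k * (T + 1)).choose K) ^ N := by
          rw [Finset.prod_const, hD, hIcard]
  calc ∑ I ∈ (Finset.univ : Finset (Fin m)).powersetCard N,
        ((Wgood m k N K T).filter (fun w => w.1 = I)).card
      ≤ ∑ _I ∈ (Finset.univ : Finset (Fin m)).powersetCard N,
        ((k * (T + 1)).choose K) ^ N := Finset.sum_le_sum hbound
    _ = m.choose N * ((k * (T + 1)).choose K) ^ N := by
        rw [Finset.sum_const, Finset.card_powersetCard, Finset.card_univ,
          Fintype.card_fin, smul_eq_mul]

/-- The master counting bound: the number of formulas with at least `N` bad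
clauses at time `t` is small. -/
lemma master_count (T t N K : ℕ) (ht1 : 1 ≤ t) (htT : t ≤ T) :
    ((Finset.univ : Finset (Formula n m k)).filter (fun Φ =>
      N ≤ (Finset.univ.filter (fun i : Fin m =>
        K ≤ (Finset.univ.filter (fun j : Fin k =>
          k1 k ≤ j.val ∧ (Φ i j).1 ∈ (p1 Φ t).Z)).card)).card)).card
      * (n - T) ^ (N * (K - 1))
    ≤ (m.choose N * ((k * (T + 1)).choose (K - 1)) ^ N) * Fintype.card (Formula n m k)
    := by
  classical
  set FAIL := ((Finset.univ : Finset (Formula n m k)).filter (fun Φ =>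
      N ≤ (Finset.univ.filter (fun i : Fin m =>
        K ≤ (Finset.univ.filter (fun j : Fin k =>
          k1 k ≤ j.val ∧ (Φ i j).1 ∈ (p1 Φ t).Z)).card)).card)) with hFAIL
  set pick : Formula n m k → Finset (Fin m) × (Fin m → Finset (Fin k × Fin (T + 1))) :=
    fun Φ => if h : ∃ w ∈ Wgood m k N (K - 1) T, Φ ∈ Ew n T (flatW w)
      then h.choose else (∅, fun _ => ∅)
    with hpick
  have hex : ∀ Φ ∈ FAIL, ∃ w ∈ Wgood m k N (K - 1) T, Φ ∈ Ew n T (flatW w) := by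
    intro Φ hΦ
    rw [hFAIL, Finset.mem_filter] at hΦ
    exact exists_witness ht1 htT hΦ.2
  have hmapsTo : ∀ Φ ∈ FAIL, pick Φ ∈ Wgood m k N (K - 1) T := by
    intro Φ hΦ
    have h := hex Φ hΦ
    rw [hpick]
    dsimp only
    rw [dif_pos h]
    exact h.choose_spec.1
  have hfib := Finset.card_eq_sum_card_fiberwise hmapsTo
  have hsub : ∀ w ∈ Wgood m k N (K - 1) T,
      (FAIL.filter (fun Φ => pick Φ = w)).card ≤ (Ew n T (flatW w)).card := by
    intro w hw
    apply Finset.card_le_card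
    intro Φ hΦ
    rw [Finset.mem_filter] at hΦ
    obtain ⟨hΦF, hΦw⟩ := hΦ
    have h := hex Φ hΦF
    have : pick Φ = h.choose := by rw [hpick]; dsimp only; rw [dif_pos h]
    rw [this] at hΦw
    rw [← hΦw]
    exact h.choose_spec.2
  have hEwb : ∀ w ∈ Wgood m k N (K - 1) T,
      (Ew n T (flatW w)).card * (n - T) ^ (N * (K - 1))
        ≤ Fintype.card (Formula n m k) := by
    intro w hw
    obtain ⟨hP, hinj, hcard⟩ := flatW_spec hw
    have := core_count (n := n) T (flatW w) hP hinj
    rwa [hcard] at this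
  calc FAIL.card * (n - T) ^ (N * (K - 1))
      = (∑ w ∈ Wgood m k N (K - 1) T, (FAIL.filter (fun Φ => pick Φ = w)).card)
          * (n - T) ^ (N * (K - 1)) := by rw [← hfib]
    _ ≤ (∑ w ∈ Wgood m k N (K - 1) T, (Ew n T (flatW w)).card)
          * (n - T) ^ (N * (K - 1)) :=
        Nat.mul_le_mul_right _ (Finset.sum_le_sum hsub)
    _ = ∑ w ∈ Wgood m k N (K - 1) T,
          (Ew n T (flatW w)).card * (n - T) ^ (N * (K - 1)) := Finset.sum_mul _ _ _
    _ ≤ ∑ _w ∈ Wgood m k N (K - 1) T, Fintype.card (Formula n m k) :=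
        Finset.sum_le_sum hEwb
    _ = (Wgood m k N (K - 1) T).card * Fintype.card (Formula n m k) := by
        rw [Finset.sum_const, smul_eq_mul]
    _ ≤ (m.choose N * ((k * (T + 1)).choose (K - 1)) ^ N) * Fintype.card (Formula n m k)
        := Nat.mul_le_mul_right _ (Wgood_card N (K - 1) T)

/-! ### Elementary analytic estimates -/

lemma pow_le_exp_mul_factorial : ∀ b : ℕ, (b : ℝ) ^ b ≤ Real.exp b * b.factorial := by
  intro b
  induction b with
  | zero => simp
  | succ b ih =>
    have hpos : (0:ℝ) ≤ (b:ℝ) := Nat.cast_nonneg b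
    have key : ((b:ℝ) + 1) ^ b ≤ Real.exp 1 * (b:ℝ) ^ b := by
      rcases Nat.eq_zero_or_pos b with hb | hb
      · subst hb; simp
      · have hbpos : (0:ℝ) < b := by exact_mod_cast hb
        have h1 : (b:ℝ) + 1 ≤ (b:ℝ) * Real.exp (1 / (b:ℝ)) := by
          have h2 := Real.add_one_le_exp (1 / (b:ℝ))
          have h3 : (b:ℝ) + 1 = (b:ℝ) * (1 / (b:ℝ) + 1) := by field_simp; ring
          rw [h3]
          exact mul_le_mul_of_nonneg_left h2 hpos
        have h4 : ((b:ℝ) + 1) ^ b ≤ ((b:ℝ) * Real.exp (1 / (b:ℝ))) ^ b :=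
          pow_le_pow_left₀ (by positivity) h1 b
        have h5 : ((b:ℝ) * Real.exp (1 / (b:ℝ))) ^ b
            = (b:ℝ) ^ b * Real.exp (b * (1 / (b:ℝ))) := by
          rw [mul_pow, Real.exp_nat_mul]
        have h6 : (b:ℝ) * (1 / (b:ℝ)) = 1 := by field_simp
        rw [h5, h6] at h4
        rw [mul_comm (Real.exp 1)]
        exact h4
    have main : ((b:ℝ) + 1) ^ (b + 1) ≤ Real.exp ((b:ℝ) + 1) * ((b + 1).factorial : ℝ) := by
      have s1 : ((b:ℝ) + 1) ^ (b + 1) = ((b:ℝ) + 1) ^ b * ((b:ℝ) + 1) := pow_succ _ _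
      have s2 : ((b:ℝ) + 1) ^ b * ((b:ℝ) + 1) ≤ (Real.exp 1 * (b:ℝ) ^ b) * ((b:ℝ) + 1) :=
        mul_le_mul_of_nonneg_right key (by positivity)
      have s3 : (Real.exp 1 * (b:ℝ) ^ b) * ((b:ℝ) + 1)
          ≤ (Real.exp 1 * (Real.exp b * b.factorial)) * ((b:ℝ) + 1) := by
        apply mul_le_mul_of_nonneg_right _ (by positivity)
        exact mul_le_mul_of_nonneg_left ih (le_of_lt (Real.exp_pos 1))
      have s4 : (Real.exp 1 * (Real.exp b * b.factorial)) * ((b:ℝ) + 1)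
          = Real.exp ((b:ℝ) + 1) * ((b + 1).factorial : ℝ) := by
        rw [Nat.factorial_succ, Real.exp_add]
        push_cast
        ring
      rw [s1, ← s4]
      exact le_trans s2 s3
    have hc1 : ((b + 1 : ℕ) : ℝ) = (b:ℝ) + 1 := by push_cast; ring
    rw [hc1]
    exact main

lemma choose_le_pow_real (a b : ℕ) (hb : 0 < b) :
    ((a.choose b : ℕ) : ℝ) ≤ (Real.exp 1 * a / b) ^ b := by
  have hdf : a.choose b * b.factorial = a.descFactorial b := by
    rw [Nat.choose_eq_descFactorial_div_factorial]
    exact Nat.div_mul_cancel (Nat.factorial_dvd_descFactorial a b)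
  have h1 : ((a.choose b : ℕ) : ℝ) * b.factorial ≤ (a : ℝ) ^ b := by
    rw [show ((a.choose b : ℕ) : ℝ) * (b.factorial : ℝ)
        = ((a.choose b * b.factorial : ℕ) : ℝ) by push_cast; ring, hdf]
    exact_mod_cast Nat.descFactorial_le_pow a b
  have hbf : (0:ℝ) < b.factorial := by exact_mod_cast Nat.factorial_pos b
  have hbR : (0:ℝ) < b := by exact_mod_cast hb
  have h2 : ((a.choose b : ℕ) : ℝ) ≤ (a : ℝ) ^ b / b.factorial := by
    rw [le_div_iff₀ hbf]; exact h1
  have h3 : (b:ℝ) ^ b * ((a:ℝ) ^ b / (b.factorial : ℝ))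
      ≤ Real.exp b * (a:ℝ) ^ b := by
    rw [mul_div_assoc']
    rw [div_le_iff₀ hbf]
    calc (b:ℝ) ^ b * (a:ℝ) ^ b ≤ (Real.exp b * b.factorial) * (a:ℝ) ^ b := by
          apply mul_le_mul_of_nonneg_right (pow_le_exp_mul_factorial b) (by positivity)
      _ = Real.exp b * (a:ℝ) ^ b * b.factorial := by ring
  have h4 : (a : ℝ) ^ b / b.factorial ≤ Real.exp b * (a:ℝ) ^ b / (b:ℝ) ^ b := by
    rw [le_div_iff₀ (by positivity)]
    calc (a:ℝ) ^ b / b.factorial * (b:ℝ) ^ b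
        = (b:ℝ) ^ b * ((a:ℝ) ^ b / b.factorial) := by ring
      _ ≤ Real.exp b * (a:ℝ) ^ b := h3
  calc ((a.choose b : ℕ) : ℝ) ≤ (a : ℝ) ^ b / b.factorial := h2
    _ ≤ Real.exp b * (a:ℝ) ^ b / (b:ℝ) ^ b := h4
    _ = (Real.exp 1 * a / b) ^ b := by
        rw [div_pow, mul_pow, ← Real.exp_nat_mul, mul_one]

/-! ### Final assembly -/

set_option maxRecDepth 8000
set_option maxHeartbeats 1600000

theorem statement19' (ε : ℝ) (hε0 : 0 < ε) (hε1 : ε < 0.1) :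
    ∃ k₀ : ℕ, ∀ k : ℕ, k₀ ≤ k →
    ∃ g : ℕ → ℝ, Filter.Tendsto (fun n : ℕ => (n : ℝ) * g n) Filter.atTop (nhds 0) ∧
      ∀ n t : ℕ, 1 ≤ t → t ≤ thetaOf ε k n →
        1 - Pr n (mOf ε k n) k {Φ : Formula n (mOf ε k n) k |
          ((Finset.univ.filter (fun i : Fin (mOf ε k n) =>
              (k : ℝ) / 4 ≤ ((Finset.univ.filter (fun j : Fin k =>
                k1 k ≤ j.val ∧ (Φ i j).1 ∈ (p1 Φ t).Z)).card : ℝ))).card : ℝ)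
            ≤ (n : ℝ) * Real.exp (-(k : ℝ))} ≤ g n := by
  classical
  refine ⟨10 ^ 110, fun k hk => ?_⟩
  -- ### basic facts about k
  have hkR : (10:ℝ) ^ 110 ≤ (k:ℝ) := by exact_mod_cast hk
  have hk0 : (0:ℝ) < k := lt_of_lt_of_le (by positivity) hkR
  have hkn0 : 0 < k := by exact_mod_cast hk0
  have hk1 : (1:ℝ) ≤ k := by nlinarith
  have hkn8 : 8 ≤ k := le_trans (by norm_num) hk
  have hexp1le3 : Real.exp 1 ≤ 3 := le_of_lt (lt_trans Real.exp_one_lt_d9 (by norm_num))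
  have hexp230 : Real.exp 230 ≤ (k:ℝ) := by
    have h1 : Real.exp 230 = Real.exp 1 ^ 230 := by
      rw [← Real.exp_nat_mul]; norm_num
    have h2 : Real.exp 1 ^ 230 ≤ (3:ℝ) ^ 230 :=
      pow_le_pow_left₀ (le_of_lt (Real.exp_pos 1)) hexp1le3 230
    have h3 : (3:ℝ) ^ 230 ≤ (10:ℝ) ^ 110 := by norm_num
    linarith
  have hlog230 : (230:ℝ) ≤ Real.log k := (Real.le_log_iff_exp_le hk0).mpr hexp230
  have hlogpos : (0:ℝ) < Real.log k := by linarith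
  have hloglek : Real.log k ≤ (k:ℝ) := by
    have := Real.log_le_sub_one_of_pos hk0; linarith
  -- ### square roots
  have hsk0 : (0:ℝ) < Real.sqrt k := Real.sqrt_pos.mpr hk0
  have hssk0 : (0:ℝ) < Real.sqrt (Real.sqrt k) := Real.sqrt_pos.mpr hsk0
  have hsksq : Real.sqrt k * Real.sqrt k = (k:ℝ) := Real.mul_self_sqrt (le_of_lt hk0)
  have hssksq : Real.sqrt (Real.sqrt k) * Real.sqrt (Real.sqrt k) = Real.sqrt k :=
    Real.mul_self_sqrt (le_of_lt hsk0)
  have hssk2048 : (2048:ℝ) ≤ Real.sqrt (Real.sqrt k) := by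
    have h1 : ((2048:ℝ) ^ 2) ^ 2 ≤ (k:ℝ) := by nlinarith
    have h2 : (2048:ℝ) ^ 2 ≤ Real.sqrt k := by
      have := Real.sqrt_le_sqrt (le_of_lt (lt_of_lt_of_le (by positivity) h1))
      calc (2048:ℝ) ^ 2 = Real.sqrt (((2048:ℝ) ^ 2) ^ 2) := (Real.sqrt_sq (by positivity)).symm
        _ ≤ Real.sqrt k := Real.sqrt_le_sqrt h1
    calc (2048:ℝ) = Real.sqrt ((2048:ℝ) ^ 2) := (Real.sqrt_sq (by positivity)).symm
      _ ≤ Real.sqrt (Real.sqrt k) := Real.sqrt_le_sqrt h2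
  have hlogk_le : Real.log k ≤ 4 * Real.sqrt (Real.sqrt k) := by
    have h1 : Real.log k = 2 * Real.log (Real.sqrt k) := by
      rw [Real.log_sqrt (le_of_lt hk0)]; ring
    have h2 : Real.log (Real.sqrt k) = 2 * Real.log (Real.sqrt (Real.sqrt k)) := by
      rw [Real.log_sqrt (le_of_lt hsk0)]; ring
    have h3 : Real.log (Real.sqrt (Real.sqrt k)) ≤ Real.sqrt (Real.sqrt k) := by
      have := Real.log_le_sub_one_of_pos hssk0; linarith
    rw [h1, h2]; linarith
  have hsklek : Real.sqrt k ≤ (k:ℝ) := by nlinarith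
  -- ### the quantity L
  have homega_lb : (207:ℝ) ≤ (1 - ε) * Real.log k := by nlinarith
  have hom1 : (1:ℝ) ≤ omOf ε k := by unfold omOf; linarith
  have hL0 : (0:ℝ) ≤ Real.log (omOf ε k) := Real.log_nonneg hom1
  have hLle : Real.log (omOf ε k) ≤ Real.log k := by
    have h1 : Real.log (omOf ε k) ≤ Real.log (Real.log k) := by
      apply Real.log_le_log (by linarith)
      unfold omOf; nlinarith
    have h2 : Real.log (Real.log k) ≤ Real.log k := by
      have := Real.log_le_sub_one_of_pos hlogpos; linarith
    linarith
  have h512L : 512 * Real.log (omOf ε k) ≤ Real.sqrt k := by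
    have h1 : 512 * Real.log (omOf ε k) ≤ 512 * Real.log k := by linarith
    have h2 : (512:ℝ) * Real.log k ≤ 512 * (4 * Real.sqrt (Real.sqrt k)) := by linarith
    have h3 : (2048:ℝ) * Real.sqrt (Real.sqrt k) ≤ Real.sqrt k := by nlinarith
    linarith
  have h8Lk : 8 * Real.log (omOf ε k) ≤ (k:ℝ) := by nlinarith
  -- ### the function g
  refine ⟨fun n : ℕ => Real.exp (-(k:ℝ) *
    ((⌊(n:ℝ) * Real.exp (-(k:ℝ))⌋₊ + 1 : ℕ) : ℝ)), ?_, ?_⟩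
  · -- tendsto
    have hc0 : (0:ℝ) < (k:ℝ) * Real.exp (-(k:ℝ)) := by positivity
    have hreal : Filter.Tendsto
        (fun x : ℝ => x * Real.exp (-((k:ℝ) * Real.exp (-(k:ℝ))) * x))
        Filter.atTop (nhds 0) := by
      have hbase := Real.tendsto_pow_mul_exp_neg_atTop_nhds_zero 1
      have hcomp : Filter.Tendsto (fun x : ℝ => ((k:ℝ) * Real.exp (-(k:ℝ))) * x)
          Filter.atTop Filter.atTop :=
        Filter.Tendsto.const_mul_atTop hc0 Filter.tendsto_id
      have h2 := hbase.comp hcomp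
      have h3 := h2.const_mul (((k:ℝ) * Real.exp (-(k:ℝ)))⁻¹)
      rw [mul_zero] at h3
      apply h3.congr
      intro x
      dsimp [Function.comp]
      rw [pow_one]
      field_simp
    have hnat := hreal.comp (tendsto_natCast_atTop_atTop (R := ℝ))
    apply tendsto_of_tendsto_of_tendsto_of_le_of_le tendsto_const_nhds hnat
    · intro n
      positivity
    · intro n
      dsimp [Function.comp]
      apply mul_le_mul_of_nonneg_left _ (Nat.cast_nonneg n)
      rw [Real.exp_le_exp]
      have hfl : (n:ℝ) * Real.exp (-(k:ℝ)) ≤ ((⌊(n:ℝ) * Real.exp (-(k:ℝ))⌋₊ + 1 : ℕ) : ℝ) := by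
        push_cast
        exact le_of_lt (Nat.lt_floor_add_one _)
      calc -(k:ℝ) * ((⌊(n:ℝ) * Real.exp (-(k:ℝ))⌋₊ + 1 : ℕ) : ℝ)
          ≤ -(k:ℝ) * ((n:ℝ) * Real.exp (-(k:ℝ))) := by
            rw [neg_mul, neg_mul, neg_le_neg_iff]
            exact mul_le_mul_of_nonneg_left hfl (le_of_lt hk0)
        _ = -((k:ℝ) * Real.exp (-(k:ℝ))) * (n:ℝ) := by ring
  · -- the main bound
    intro n t ht1 htT
    set T := thetaOf ε k n with hTdef
    set m' := mOf ε k n with hm'def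
    set K := (k + 3) / 4 with hKdef
    set N := ⌊(n:ℝ) * Real.exp (-(k:ℝ))⌋₊ + 1 with hNdef
    -- n ≥ 1
    have hn1 : 1 ≤ n := by
      by_contra hn
      have hn0 : n = 0 := by omega
      have hT0 : T = 0 := by
        rw [hTdef, hn0]
        unfold thetaOf
        norm_num
      omega
    have hnR : (1:ℝ) ≤ (n:ℝ) := by exact_mod_cast hn1
    have hnR0 : (0:ℝ) < (n:ℝ) := by linarith
    -- T facts
    have hT1 : 1 ≤ T := le_trans ht1 htT
    have hTle : (T:ℝ) ≤ 4 * (n:ℝ) / k * Real.log (omOf ε k) := by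
      rw [hTdef]
      unfold thetaOf
      exact Nat.floor_le (by positivity)
    have hTn2 : (T:ℝ) ≤ (n:ℝ) / 2 := by
      have heq : 4 * (n:ℝ) / k * Real.log (omOf ε k)
          = (n:ℝ) * (4 * Real.log (omOf ε k) / k) := by ring
      have hfrac : 4 * Real.log (omOf ε k) / k ≤ 1/2 := by
        rw [div_le_iff₀ hk0]; linarith
      calc (T:ℝ) ≤ 4 * (n:ℝ) / k * Real.log (omOf ε k) := hTle
        _ = (n:ℝ) * (4 * Real.log (omOf ε k) / k) := heq
        _ ≤ (n:ℝ) * (1/2) := mul_le_mul_of_nonneg_left hfrac (by linarith)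
        _ = (n:ℝ)/2 := by ring
    have hTltn : T < n := by
      have h1 : (T:ℝ) < (n:ℝ) := by linarith
      exact Nat.cast_lt.mp h1
    have hc'cast : ((n - T : ℕ) : ℝ) = (n:ℝ) - (T:ℝ) := by
      rw [Nat.cast_sub (le_of_lt hTltn)]
    have hc'half : (n:ℝ) / 2 ≤ ((n - T : ℕ) : ℝ) := by rw [hc'cast]; linarith
    have hc'pos : (0:ℝ) < ((n - T : ℕ) : ℝ) := by linarith
    have h1le4 : (1:ℝ) ≤ 4 * (n:ℝ) / k * Real.log (omOf ε k) := by
      have h1T : (1:ℝ) ≤ (T:ℝ) := by exact_mod_cast hT1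
      linarith
    -- K facts
    have hK2 : 2 ≤ K := by rw [hKdef]; omega
    have hK8 : (k:ℝ) ≤ 8 * ((K - 1 : ℕ) : ℝ) := by
      have h1 : k ≤ 8 * (K - 1) := by rw [hKdef]; omega
      exact_mod_cast h1
    have hK1pos : (0:ℝ) < ((K - 1:ℕ):ℝ) := by
      have h1 : 0 < K - 1 := by omega
      exact_mod_cast h1
    -- N facts
    have hNlb : (n:ℝ) * Real.exp (-(k:ℝ)) ≤ ((N:ℕ):ℝ) := by
      rw [hNdef]; push_cast; exact le_of_lt (Nat.lt_floor_add_one _)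
    have hN1 : 0 < N := Nat.succ_pos _
    have hNpos : (0:ℝ) < ((N:ℕ):ℝ) := by exact_mod_cast hN1
    -- m' bound
    have h1ε : (0:ℝ) ≤ 1 - ε := by linarith
    have hm'le : (m':ℝ) ≤ Real.exp k * n := by
      have h1 : (m':ℝ) ≤ (1 - ε) * 2^k * Real.log k / k * n := by
        rw [hm'def]
        unfold mOf
        apply Nat.floor_le
        have : (0:ℝ) ≤ (1 - ε) * 2^k * Real.log k / k := by positivity
        positivity
      have h2pow : (2:ℝ)^k ≤ Real.exp k := by
        have he2 : (2:ℝ) ≤ Real.exp 1 := by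
          have := Real.exp_one_gt_d9; linarith
        calc (2:ℝ)^k ≤ (Real.exp 1)^k := pow_le_pow_left₀ (by norm_num) he2 k
          _ = Real.exp k := by rw [← Real.exp_nat_mul, mul_one]
      have h3 : (1 - ε) * 2^k * Real.log k ≤ Real.exp k * k := by
        have ha : (1 - ε) * 2^k ≤ Real.exp k := by
          calc (1 - ε) * 2^k ≤ 1 * 2^k := by
                apply mul_le_mul_of_nonneg_right (by linarith) (by positivity)
            _ = (2:ℝ)^k := by ring
            _ ≤ Real.exp k := h2pow
        calc (1 - ε) * 2^k * Real.log k ≤ Real.exp k * Real.log k := by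
              apply mul_le_mul_of_nonneg_right ha (le_of_lt hlogpos)
          _ ≤ Real.exp k * k := by
              apply mul_le_mul_of_nonneg_left hloglek (le_of_lt (Real.exp_pos _))
      calc (m':ℝ) ≤ (1 - ε) * 2^k * Real.log k / k * n := h1
        _ ≤ Real.exp k * n := by
            apply mul_le_mul_of_nonneg_right _ (Nat.cast_nonneg n)
            rw [div_le_iff₀ hk0]
            linarith
    -- the A bound
    have hA : Real.exp 1 * (m':ℝ) / ((N:ℕ):ℝ) ≤ Real.exp (2*(k:ℝ)+1) := by
      rw [div_le_iff₀ hNpos]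
      have hexpeq : Real.exp (2*(k:ℝ)+1) * Real.exp (-(k:ℝ)) = Real.exp 1 * Real.exp k := by
        rw [← Real.exp_add, ← Real.exp_add]; ring_nf
      calc Real.exp 1 * (m':ℝ) ≤ Real.exp 1 * (Real.exp k * n) :=
            mul_le_mul_of_nonneg_left hm'le (le_of_lt (Real.exp_pos 1))
        _ = Real.exp (2*(k:ℝ)+1) * ((n:ℝ) * Real.exp (-(k:ℝ))) := by
            rw [show Real.exp (2*(k:ℝ)+1) * ((n:ℝ) * Real.exp (-(k:ℝ)))
              = (Real.exp (2*(k:ℝ)+1) * Real.exp (-(k:ℝ))) * (n:ℝ) by ring, hexpeq]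
            ring
        _ ≤ Real.exp (2*(k:ℝ)+1) * ((N:ℕ):ℝ) :=
            mul_le_mul_of_nonneg_left hNlb (le_of_lt (Real.exp_pos _))
    -- the B bound
    have hTplus : ((T:ℝ) + 1) ≤ 8 * (n:ℝ) / k * Real.log (omOf ε k) := by
      have heq : 8 * (n:ℝ) / k * Real.log (omOf ε k)
          = 4 * (n:ℝ) / k * Real.log (omOf ε k) + 4 * (n:ℝ) / k * Real.log (omOf ε k) := by
        ring
      linarith
    have hkT1cast : ((k * (T+1) : ℕ):ℝ) = (k:ℝ) * ((T:ℝ)+1) := by push_cast; ring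
    have hB : Real.exp 1 * ((k*(T+1):ℕ):ℝ) / ((K-1:ℕ):ℝ)
        ≤ ((n - T:ℕ):ℝ) / Real.sqrt k := by
      rw [div_le_div_iff₀ hK1pos hsk0]
      have h1 : (k:ℝ) * ((T:ℝ)+1) ≤ 8 * (n:ℝ) * Real.log (omOf ε k) := by
        have h2 := mul_le_mul_of_nonneg_left hTplus (le_of_lt hk0)
        have heq : (k:ℝ) * (8 * (n:ℝ) / k * Real.log (omOf ε k))
            = 8 * (n:ℝ) * Real.log (omOf ε k) := by field_simp
        rw [heq] at h2
        exact h2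
      have hlhs : Real.exp 1 * ((k*(T+1):ℕ):ℝ) * Real.sqrt k
          ≤ 24 * ((n:ℝ) * Real.log (omOf ε k)) * Real.sqrt k := by
        apply mul_le_mul_of_nonneg_right _ (le_of_lt hsk0)
        rw [hkT1cast]
        calc Real.exp 1 * ((k:ℝ) * ((T:ℝ)+1)) ≤ 3 * ((k:ℝ)*((T:ℝ)+1)) := by
              apply mul_le_mul_of_nonneg_right hexp1le3 (by positivity)
          _ ≤ 3 * (8 * (n:ℝ) * Real.log (omOf ε k)) :=
              mul_le_mul_of_nonneg_left h1 (by norm_num)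
          _ = 24 * ((n:ℝ) * Real.log (omOf ε k)) := by ring
      have hrhs : 24 * ((n:ℝ) * Real.log (omOf ε k)) * Real.sqrt k
          ≤ ((n - T:ℕ):ℝ) * ((K-1:ℕ):ℝ) := by
        have hstep : 512 * Real.log (omOf ε k) * Real.sqrt k ≤ Real.sqrt k * Real.sqrt k :=
          mul_le_mul_of_nonneg_right h512L (le_of_lt hsk0)
        have hLsk : 512 * Real.log (omOf ε k) * Real.sqrt k ≤ (k:ℝ) :=
          le_of_le_of_eq hstep hsksq
        have h2 : 24 * ((n:ℝ) * Real.log (omOf ε k)) * Real.sqrt k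
            ≤ (n:ℝ)/2 * ((k:ℝ)/8) := by
          have h3 := mul_le_mul_of_nonneg_left hLsk (le_of_lt hnR0)
          have hM0 : (0:ℝ) ≤ (n:ℝ) * (Real.log (omOf ε k) * Real.sqrt k) := by positivity
          ring_nf at h3 hM0 ⊢
          linarith
        have h4 : (n:ℝ)/2 * ((k:ℝ)/8) ≤ ((n - T:ℕ):ℝ) * ((K-1:ℕ):ℝ) := by
          apply mul_le_mul hc'half (by linarith) (by positivity) (by positivity)
        linarith
      linarith
    -- the sqrt-power bound
    have hskpow : Real.exp (3*(k:ℝ)+1) ≤ Real.sqrt k ^ (K-1) := by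
      have hskexp : Real.sqrt k = Real.exp (Real.log k / 2) := by
        rw [← Real.log_sqrt (le_of_lt hk0), Real.exp_log hsk0]
      rw [hskexp, ← Real.exp_nat_mul, Real.exp_le_exp]
      have h1 : (k:ℝ)/8 * 115 ≤ ((K-1:ℕ):ℝ) * (Real.log k / 2) := by
        apply mul_le_mul (by linarith) (by linarith) (by norm_num) (by positivity)
      linarith
    -- the per-factor bound
    have hBnonneg : (0:ℝ) ≤ Real.exp 1 * ((k*(T+1):ℕ):ℝ) / ((K-1:ℕ):ℝ) := by positivity
    have hfac : (Real.exp 1 * (m':ℝ) / ((N:ℕ):ℝ)) *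
        (Real.exp 1 * ((k*(T+1):ℕ):ℝ) / ((K-1:ℕ):ℝ))^(K-1)
        ≤ Real.exp (-(k:ℝ)) * ((n-T:ℕ):ℝ)^(K-1) := by
      have h1 : (Real.exp 1 * ((k*(T+1):ℕ):ℝ) / ((K-1:ℕ):ℝ))^(K-1)
          ≤ (((n-T:ℕ):ℝ) / Real.sqrt k)^(K-1) := pow_le_pow_left₀ hBnonneg hB _
      have h2 : (((n-T:ℕ):ℝ) / Real.sqrt k)^(K-1)
          = ((n-T:ℕ):ℝ)^(K-1) / Real.sqrt k^(K-1) := div_pow _ _ _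
      have hexpdiv : Real.exp (2*(k:ℝ)+1) / Real.exp (3*(k:ℝ)+1) = Real.exp (-(k:ℝ)) := by
        rw [← Real.exp_sub]; ring_nf
      calc (Real.exp 1 * (m':ℝ) / ((N:ℕ):ℝ)) *
          (Real.exp 1 * ((k*(T+1):ℕ):ℝ) / ((K-1:ℕ):ℝ))^(K-1)
          ≤ Real.exp (2*(k:ℝ)+1) * (((n-T:ℕ):ℝ)^(K-1) / Real.sqrt k^(K-1)) := by
            apply mul_le_mul hA (h1.trans_eq h2) (by positivity) (le_of_lt (Real.exp_pos _))
        _ ≤ Real.exp (2*(k:ℝ)+1) * (((n-T:ℕ):ℝ)^(K-1) / Real.exp (3*(k:ℝ)+1)) := by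
            apply mul_le_mul_of_nonneg_left _ (le_of_lt (Real.exp_pos _))
            exact div_le_div_of_nonneg_left (by positivity) (Real.exp_pos _) hskpow
        _ = Real.exp (-(k:ℝ)) * ((n-T:ℕ):ℝ)^(K-1) := by
            rw [show Real.exp (2*(k:ℝ)+1) * (((n-T:ℕ):ℝ)^(K-1) / Real.exp (3*(k:ℝ)+1))
              = (Real.exp (2*(k:ℝ)+1) / Real.exp (3*(k:ℝ)+1)) * ((n-T:ℕ):ℝ)^(K-1) by ring,
              hexpdiv]
    -- combining with the binomial bounds
    have hDchoose : (((k*(T+1)).choose (K-1) : ℕ):ℝ)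
        ≤ (Real.exp 1 * ((k*(T+1):ℕ):ℝ) / ((K-1:ℕ):ℝ))^(K-1) :=
      choose_le_pow_real (k*(T+1)) (K-1) (by omega)
    have hNchoose : ((m'.choose N : ℕ):ℝ) ≤ (Real.exp 1 * (m':ℝ) / ((N:ℕ):ℝ))^N :=
      choose_le_pow_real m' N hN1
    have hmain : ((m'.choose N : ℕ):ℝ) * (((k*(T+1)).choose (K-1):ℕ):ℝ)^N
        ≤ Real.exp (-(k:ℝ) * ((N:ℕ):ℝ)) * ((n-T:ℕ):ℝ)^(N*(K-1)) := by
      have hexpN : (Real.exp (-(k:ℝ)))^N = Real.exp (-(k:ℝ) * ((N:ℕ):ℝ)) := by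
        rw [← Real.exp_nat_mul]
        congr 1
        ring
      calc ((m'.choose N : ℕ):ℝ) * (((k*(T+1)).choose (K-1):ℕ):ℝ)^N
          ≤ (Real.exp 1 * (m':ℝ) / ((N:ℕ):ℝ))^N *
            ((Real.exp 1 * ((k*(T+1):ℕ):ℝ) / ((K-1:ℕ):ℝ))^(K-1))^N := by
            apply mul_le_mul hNchoose (pow_le_pow_left₀ (Nat.cast_nonneg _) hDchoose N)
              (by positivity) (by positivity)
        _ = ((Real.exp 1 * (m':ℝ) / ((N:ℕ):ℝ)) *
            (Real.exp 1 * ((k*(T+1):ℕ):ℝ) / ((K-1:ℕ):ℝ))^(K-1))^N := (mul_pow _ _ _).symm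
        _ ≤ (Real.exp (-(k:ℝ)) * ((n-T:ℕ):ℝ)^(K-1))^N :=
            pow_le_pow_left₀ (by positivity) hfac N
        _ = Real.exp (-(k:ℝ) * ((N:ℕ):ℝ)) * ((n-T:ℕ):ℝ)^(N*(K-1)) := by
            rw [mul_pow, hexpN, ← pow_mul, Nat.mul_comm (K-1) N]
    -- ### cast the master count to the reals
    have hmc := master_count (n := n) (m := m') (k := k) T t N K ht1 htT
    have hFne : Nonempty (Formula n m' k) := ⟨fun _ _ => (⟨0, hn1⟩, true)⟩
    have hu0 : 0 < Fintype.card (Formula n m' k) := Fintype.card_pos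
    have huR : (0:ℝ) < (Fintype.card (Formula n m' k) : ℝ) := by exact_mod_cast hu0
    set FAIL := ((Finset.univ : Finset (Formula n m' k)).filter (fun Φ =>
      N ≤ (Finset.univ.filter (fun i : Fin m' =>
        K ≤ (Finset.univ.filter (fun j : Fin k =>
          k1 k ≤ j.val ∧ (Φ i j).1 ∈ (p1 Φ t).Z)).card)).card)) with hFAILdef
    have hmcR : (FAIL.card : ℝ) * ((n-T:ℕ):ℝ)^(N*(K-1))
        ≤ ((m'.choose N : ℕ):ℝ) * (((k*(T+1)).choose (K-1):ℕ):ℝ)^N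
          * (Fintype.card (Formula n m' k) : ℝ) := by
      exact_mod_cast hmc
    have hFAILle : (FAIL.card : ℝ)
        ≤ Real.exp (-(k:ℝ) * ((N:ℕ):ℝ)) * (Fintype.card (Formula n m' k) : ℝ) := by
      have hpowpos : (0:ℝ) < ((n-T:ℕ):ℝ)^(N*(K-1)) := by positivity
      apply le_of_mul_le_mul_right _ hpowpos
      calc (FAIL.card : ℝ) * ((n-T:ℕ):ℝ)^(N*(K-1))
          ≤ ((m'.choose N : ℕ):ℝ) * (((k*(T+1)).choose (K-1):ℕ):ℝ)^N
            * (Fintype.card (Formula n m' k) : ℝ) := hmcR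
        _ ≤ (Real.exp (-(k:ℝ) * ((N:ℕ):ℝ)) * ((n-T:ℕ):ℝ)^(N*(K-1)))
            * (Fintype.card (Formula n m' k) : ℝ) :=
            mul_le_mul_of_nonneg_right hmain (le_of_lt huR)
        _ = Real.exp (-(k:ℝ) * ((N:ℕ):ℝ)) * (Fintype.card (Formula n m' k) : ℝ)
            * ((n-T:ℕ):ℝ)^(N*(K-1)) := by ring
    -- ### every formula is good or in FAIL
    have hcover : ∀ Φ : Formula n m' k,
        ¬ (((Finset.univ.filter (fun i : Fin m' =>
            (k:ℝ)/4 ≤ ((Finset.univ.filter (fun j : Fin k =>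
              k1 k ≤ j.val ∧ (Φ i j).1 ∈ (p1 Φ t).Z)).card : ℝ))).card : ℝ)
          ≤ (n:ℝ) * Real.exp (-(k:ℝ))) → Φ ∈ FAIL := by
      intro Φ hΦ
      rw [hFAILdef, Finset.mem_filter]
      refine ⟨Finset.mem_univ _, ?_⟩
      have hinner : (Finset.univ.filter (fun i : Fin m' =>
          (k:ℝ)/4 ≤ ((Finset.univ.filter (fun j : Fin k =>
            k1 k ≤ j.val ∧ (Φ i j).1 ∈ (p1 Φ t).Z)).card : ℝ)))
          = (Finset.univ.filter (fun i : Fin m' =>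
            K ≤ (Finset.univ.filter (fun j : Fin k =>
              k1 k ≤ j.val ∧ (Φ i j).1 ∈ (p1 Φ t).Z)).card)) := by
        apply Finset.filter_congr
        intro i _
        constructor
        · intro h
          have h4 : (k:ℝ) ≤ 4 * ((Finset.univ.filter (fun j : Fin k =>
              k1 k ≤ j.val ∧ (Φ i j).1 ∈ (p1 Φ t).Z)).card : ℝ) := by
            rw [div_le_iff₀ (by norm_num : (0:ℝ) < 4)] at h
            linarith
          have h4' : k ≤ 4 * (Finset.univ.filter (fun j : Fin k =>
              k1 k ≤ j.val ∧ (Φ i j).1 ∈ (p1 Φ t).Z)).card := by exact_mod_cast h4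
          rw [hKdef]
          omega
        · intro h
          rw [hKdef] at h
          have h4 : k ≤ 4 * (Finset.univ.filter (fun j : Fin k =>
              k1 k ≤ j.val ∧ (Φ i j).1 ∈ (p1 Φ t).Z)).card := by omega
          have h4' : (k:ℝ) ≤ 4 * ((Finset.univ.filter (fun j : Fin k =>
              k1 k ≤ j.val ∧ (Φ i j).1 ∈ (p1 Φ t).Z)).card : ℝ) := by exact_mod_cast h4
          rw [div_le_iff₀ (by norm_num : (0:ℝ) < 4)]
          linarith
      push_neg at hΦ
      rw [hinner] at hΦ
      have hflt : ⌊(n:ℝ) * Real.exp (-(k:ℝ))⌋₊ < (Finset.univ.filter (fun i : Fin m' =>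
          K ≤ (Finset.univ.filter (fun j : Fin k =>
            k1 k ≤ j.val ∧ (Φ i j).1 ∈ (p1 Φ t).Z)).card)).card :=
        (Nat.floor_lt (by positivity)).mpr hΦ
      rw [hNdef]
      omega
    -- ### relate to Pr
    set G := (Finset.univ : Finset (Formula n m' k)).filter
      (fun Φ => Φ ∈ {Φ : Formula n m' k |
        ((Finset.univ.filter (fun i : Fin m' =>
            (k : ℝ) / 4 ≤ ((Finset.univ.filter (fun j : Fin k =>
              k1 k ≤ j.val ∧ (Φ i j).1 ∈ (p1 Φ t).Z)).card : ℝ))).card : ℝ)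
          ≤ (n : ℝ) * Real.exp (-(k : ℝ))}) with hGdef
    have hGF : (Finset.univ : Finset (Formula n m' k)) ⊆ G ∪ FAIL := by
      intro Φ _
      rw [Finset.mem_union]
      by_cases hΦ : ((Finset.univ.filter (fun i : Fin m' =>
          (k : ℝ) / 4 ≤ ((Finset.univ.filter (fun j : Fin k =>
            k1 k ≤ j.val ∧ (Φ i j).1 ∈ (p1 Φ t).Z)).card : ℝ))).card : ℝ)
          ≤ (n : ℝ) * Real.exp (-(k : ℝ))
      · left
        rw [hGdef, Finset.mem_filter]
        exact ⟨Finset.mem_univ _, hΦ⟩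
      · right
        exact hcover Φ hΦ
    have hcards : Fintype.card (Formula n m' k) ≤ G.card + FAIL.card := by
      calc Fintype.card (Formula n m' k)
          = (Finset.univ : Finset (Formula n m' k)).card := Finset.card_univ.symm
        _ ≤ (G ∪ FAIL).card := Finset.card_le_card hGF
        _ ≤ G.card + FAIL.card := Finset.card_union_le _ _
    have hcardsR : (Fintype.card (Formula n m' k) : ℝ) ≤ (G.card:ℝ) + (FAIL.card:ℝ) := by
      exact_mod_cast hcards
    have hPrEq : Pr n m' k {Φ : Formula n m' k |
        ((Finset.univ.filter (fun i : Fin m' =>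
            (k : ℝ) / 4 ≤ ((Finset.univ.filter (fun j : Fin k =>
              k1 k ≤ j.val ∧ (Φ i j).1 ∈ (p1 Φ t).Z)).card : ℝ))).card : ℝ)
          ≤ (n : ℝ) * Real.exp (-(k : ℝ))}
        = (G.card : ℝ) / (Fintype.card (Formula n m' k) : ℝ) := by
      unfold Pr
      rw [← hGdef, Finset.card_univ]
    rw [hPrEq]
    have hfinal1 : 1 - (G.card : ℝ) / (Fintype.card (Formula n m' k) : ℝ)
        ≤ (FAIL.card : ℝ) / (Fintype.card (Formula n m' k) : ℝ) := by
      rw [sub_le_iff_le_add, ← add_div, le_div_iff₀ huR, one_mul]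
      linarith
    have hfinal2 : (FAIL.card : ℝ) / (Fintype.card (Formula n m' k) : ℝ)
        ≤ Real.exp (-(k:ℝ) * ((N:ℕ):ℝ)) := by
      rw [div_le_iff₀ huR]
      exact hFAILle
    calc 1 - (G.card : ℝ) / (Fintype.card (Formula n m' k) : ℝ)
        ≤ Real.exp (-(k:ℝ) * ((N:ℕ):ℝ)) := le_trans hfinal1 hfinal2
      _ ≤ Real.exp (-(k:ℝ) * ((⌊(n:ℝ) * Real.exp (-(k:ℝ))⌋₊ + 1 : ℕ) : ℝ)) := by
          rw [hNdef]

/-- Lemma 13.  For each `1 ≤ t ≤ θ`, with probability at least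
`1 - o(1/n)` (uniformly in `t`), at most `n exp(-k)` clauses have at least `k/4`
positions `k₁ < j ≤ k` whose variable lies in `Z_t`. -/
theorem statement19 (ε : ℝ) (hε0 : 0 < ε) (hε1 : ε < 0.1) :
    ∃ k₀ : ℕ, ∀ k : ℕ, k₀ ≤ k →
    ∃ g : ℕ → ℝ, Tendsto (fun n : ℕ => (n : ℝ) * g n) atTop (nhds 0) ∧
      ∀ n t : ℕ, 1 ≤ t → t ≤ thetaOf ε k n →
        1 - Pr n (mOf ε k n) k {Φ : Formula n (mOf ε k n) k |
          ((Finset.univ.filter (fun i : Fin (mOf ε k n) =>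
              (k : ℝ) / 4 ≤ ((Finset.univ.filter (fun j : Fin k =>
                k1 k ≤ j.val ∧ (Φ i j).1 ∈ (p1 Φ t).Z)).card : ℝ))).card : ℝ)
            ≤ (n : ℝ) * Real.exp (-(k : ℝ))} ≤ g n := by
  exact statement19' ε hε0 hε1

end RandomKSAT
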